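/- arXiv:2205.04249 — 5 statements merged into one kernel-verified Lean document; each statement's English description precedes it below -/
import Mathlib

section
/- Let A = (a_0, a_1, ..., a_n) be a finite sequence of real numbers and let ℓ ∈ {1, ..., n-1}. Set A_1 = (a_0, ..., a_ℓ) and A_2 = (a_ℓ, ..., a_n). If a_ℓ ≠ 0, then V(A) = V(A_1) + V(A_2). -/
open Classical in
/-- Number of sign variations in a finite sequence of reals: the number of pairs of
consecutive terms in the subsequence of nonzero terms that have opposite signs. -/
noncomputable def signVar (l : List ℝ) : ℕ :=
  let nz := l.filter (fun x => decide (x ≠ 0))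
  (nz.zip nz.tail).countP (fun p => decide (p.1 * p.2 < 0))

lemma zip_tail_split {α : Type*} (u : List α) (x : α) (v : List α) :
    (u ++ x :: v).zip (u ++ x :: v).tail
      = ((u ++ [x]).zip (u ++ [x]).tail) ++ ((x :: v).zip v) := by
  induction u with
  | nil => simp
  | cons a u ih =>
    cases u with
    | nil => simp
    | cons b u =>
      simp only [List.cons_append, List.tail_cons, List.zip_cons_cons] at *
      rw [ih]

lemma signVar_split (u : List ℝ) (x : ℝ) (v : List ℝ) (hx : x ≠ 0) :
    signVar (u ++ x :: v) = signVar (u ++ [x]) + signVar (x :: v) := by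
  unfold signVar
  have hf : ∀ w : List ℝ, (u ++ x :: w).filter (fun y => decide (y ≠ 0))
      = u.filter (fun y => decide (y ≠ 0)) ++ x :: w.filter (fun y => decide (y ≠ 0)) := by
    intro w
    simp [List.filter_append, List.filter_cons, hx]
  have h1 := hf v
  have h2 := hf []
  simp only [List.filter_nil] at h2
  have h3 : (x :: v).filter (fun y => decide (y ≠ 0))
      = x :: v.filter (fun y => decide (y ≠ 0)) := by
    simp [List.filter_cons, hx]
  rw [h1, h2, h3]
  dsimp only
  rw [zip_tail_split]
  rw [List.countP_append]
  rfl

theorem sign_variation_split_at_nonzero (n ℓ : ℕ) (a : ℕ → ℝ)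
    (h1 : 1 ≤ ℓ) (h2 : ℓ < n) (hℓ : a ℓ ≠ 0) :
    signVar ((List.range (n + 1)).map a)
      = signVar ((List.range (ℓ + 1)).map a)
        + signVar ((List.range (n - ℓ + 1)).map (fun i => a (ℓ + i))) := by
  obtain ⟨m, rfl⟩ : ∃ m, n = ℓ + m := ⟨n - ℓ, (Nat.add_sub_cancel' h2.le).symm⟩
  have hm : ℓ + m - ℓ = m := by omega
  rw [hm]
  have e1 : (List.range (ℓ + m + 1)).map a
      = (List.range ℓ).map a ++ a ℓ :: (List.range m).map (fun i => a (ℓ + (i + 1))) := by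
    have : ℓ + m + 1 = ℓ + (m + 1) := by omega
    rw [this, List.range_add, List.range_succ_eq_map]
    simp [List.map_map, Function.comp]
  have e2 : (List.range (ℓ + 1)).map a = (List.range ℓ).map a ++ [a ℓ] := by
    rw [List.range_succ]; simp
  have e3 : (List.range (m + 1)).map (fun i => a (ℓ + i))
      = a ℓ :: (List.range m).map (fun i => a (ℓ + (i + 1))) := by
    rw [List.range_succ_eq_map]
    simp [List.map_map, Function.comp]
  rw [e1, e2, e3, signVar_split _ _ _ hℓ]
end

section
/- (Descartes's rule of signs) Let f(x) be a polynomial with real coefficients of degree n with f(0) ≠ 0. Then there exists a nonnegative even integer ν such that Z_f(0, ∞) = V^{(n)}_f(0) - ν, where Z_f(0, ∞) is the number of positive real roots of f counted with multiplicity and V^{(n)}_f(0) is the number of sign variations in the coefficient sequence of f. -/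
open Classical in
/-- Number of roots of `f` greater than `a`, counted with multiplicity. -/
noncomputable def Zgt (f : Polynomial ℝ) (a : ℝ) : ℕ :=
  (f.roots.filter (fun x => a < x)).card

namespace Desc

noncomputable def varNZ (w : List ℝ) : ℕ :=
  (w.zip w.tail).countP (fun p => decide (p.1 * p.2 < 0))

noncomputable def nzl (l : List ℝ) : List ℝ := l.filter (fun x => decide (x ≠ 0))

lemma signVar_eq (l : List ℝ) : signVar l = varNZ (nzl l) := rfl

lemma varNZ_nil : varNZ [] = 0 := rfl
lemma varNZ_singleton (x : ℝ) : varNZ [x] = 0 := rfl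
lemma varNZ_cons_cons (x y : ℝ) (t : List ℝ) :
    varNZ (x :: y :: t) = (if x * y < 0 then 1 else 0) + varNZ (y :: t) := by
  simp [varNZ, List.countP_cons]
  by_cases h : x * y < 0 <;> simp [h] <;> ring

noncomputable def fns (l : List ℝ) : ℝ := (nzl l).headD 0

lemma nzl_cons_zero (l : List ℝ) : nzl (0 :: l) = nzl l := by simp [nzl]
lemma nzl_cons (x : ℝ) (hx : x ≠ 0) (l : List ℝ) : nzl (x :: l) = x :: nzl l := by
  simp [nzl, hx]

lemma fns_cons_zero (l : List ℝ) : fns (0 :: l) = fns l := by simp [fns, nzl_cons_zero]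
lemma fns_cons (x : ℝ) (hx : x ≠ 0) (l : List ℝ) : fns (x :: l) = x := by
  simp [fns, nzl_cons x hx l]

lemma signVar_cons_zero (l : List ℝ) : signVar (0 :: l) = signVar l := by
  simp [signVar_eq, nzl_cons_zero]

lemma signVar_cons (x : ℝ) (hx : x ≠ 0) (l : List ℝ) :
    signVar (x :: l) = signVar l + (if x * fns l < 0 then 1 else 0) := by
  rw [signVar_eq, signVar_eq, nzl_cons x hx]
  cases h : nzl l with
  | nil => simp [varNZ_singleton, varNZ_nil, fns, h]
  | cons a t =>
      rw [varNZ_cons_cons]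
      simp [fns, h, Nat.add_comm]

lemma fns_nil : fns [] = 0 := rfl
lemma signVar_nil : signVar [] = 0 := rfl

lemma fns_ne_zero_of_mem_ne (l : List ℝ) (x : ℝ) (hx : x ≠ 0) (hm : x ∈ l) : fns l ≠ 0 := by
  induction l with
  | nil => simp at hm
  | cons a t ih =>
      by_cases ha : a = 0
      · subst ha
        rw [fns_cons_zero]
        rcases List.mem_cons.1 hm with h' | hm
        · exact absurd h' hx
        · exact ih hm
      · rw [fns_cons a ha]; exact ha

noncomputable def lst (l : List ℝ) : ℝ := l.getLastD 0

lemma lst_singleton (x : ℝ) : lst [x] = x := rfl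
lemma lst_cons (x : ℝ) (l : List ℝ) (h : l ≠ []) : lst (x :: l) = lst l := by
  cases l with
  | nil => exact absurd rfl h
  | cons a t => simp [lst, List.getLastD_cons]

lemma lst_mem (l : List ℝ) (h : l ≠ []) : lst l ∈ l := by
  cases l with
  | nil => exact absurd rfl h
  | cons a t =>
      have : lst (a :: t) = (a :: t).getLast (by simp) := by
        simp [lst, List.getLastD_eq_getLast?, List.getLast?_eq_getLast]
      rw [this]
      exact List.getLast_mem _

lemma fns_ne_zero (l : List ℝ) (h : lst l ≠ 0) : fns l ≠ 0 := by
  have hne : l ≠ [] := by rintro rfl; exact h rfl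
  exact fns_ne_zero_of_mem_ne l (lst l) h (lst_mem l hne)

lemma signVar_le_cons (x : ℝ) (l : List ℝ) : signVar l ≤ signVar (x :: l) := by
  by_cases hx : x = 0
  · subst hx; rw [signVar_cons_zero]
  · rw [signVar_cons x hx]; omega

lemma signVar_cons_le (x : ℝ) (l : List ℝ) : signVar (x :: l) ≤ signVar l + 1 := by
  by_cases hx : x = 0
  · subst hx; rw [signVar_cons_zero]; omega
  · rw [signVar_cons x hx]; split <;> omega

lemma opp_iff {u v : ℝ} (hu : u ≠ 0) (h : u * v < 0) : (¬ 0 < u ↔ 0 < v) := by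
  constructor
  · intro h1
    have hu' : u < 0 := lt_of_le_of_ne (le_of_not_gt h1) hu
    nlinarith
  · intro hv h1
    nlinarith

lemma same_iff {u v : ℝ} (h : 0 < u * v) : (0 < u ↔ 0 < v) := by
  constructor
  · intro h1; nlinarith
  · intro h1; nlinarith

/-- parity of sign variations vs endpoints -/
lemma even_signVar_iff (l : List ℝ) (h : lst l ≠ 0) :
    (Even (signVar l) ↔ 0 < fns l * lst l) := by
  induction l with
  | nil => exact absurd rfl h
  | cons y ys ih =>
      by_cases hys : ys = []
      · subst hys
        have hy : y ≠ 0 := h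
        rw [signVar_cons y hy, fns_cons y hy, lst_singleton]
        rw [fns_nil, signVar_nil, mul_zero, if_neg (lt_irrefl 0)]
        simpa using mul_self_pos.2 hy
      · rw [lst_cons y ys hys] at h ⊢
        have hlst := h
        have hfns := fns_ne_zero ys hlst
        by_cases hy : y = 0
        · subst hy; rw [fns_cons_zero, signVar_cons_zero]; exact ih h
        · rw [fns_cons y hy, signVar_cons y hy]
          rcases lt_trichotomy (y * fns ys) 0 with hc | hc | hc
          · rw [if_pos hc, Nat.even_add_one, ih h]
            have hprod : (fns ys * lst ys) * (y * lst ys) < 0 := by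
              nlinarith [mul_self_pos.2 hlst]
            exact opp_iff (mul_ne_zero hfns hlst) hprod
          · exact absurd (mul_eq_zero.1 hc) (by push_neg; exact ⟨hy, hfns⟩)
          · rw [if_neg (by linarith : ¬ y * fns ys < 0), Nat.add_zero, ih h]
            have hprod : 0 < (fns ys * lst ys) * (y * lst ys) := by
              nlinarith [mul_self_pos.2 hlst]
            exact same_iff hprod

lemma signVar_single (x : ℝ) : signVar [x] = 0 := by
  by_cases hx : x = 0
  · subst hx; rw [signVar_cons_zero, signVar_nil]
  · rw [signVar_cons x hx, signVar_nil, fns_nil, mul_zero, if_neg (lt_irrefl 0)]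

lemma fns_single (x : ℝ) (hx : x ≠ 0) : fns [x] = x := fns_cons x hx []

lemma signVar_pair (x y : ℝ) (hx : x ≠ 0) (hy : y ≠ 0) :
    signVar [x, y] = if x * y < 0 then 1 else 0 := by
  rw [signVar_cons x hx, fns_single y hy, signVar_single, Nat.zero_add]

noncomputable def mulAux (r : ℝ) : ℝ → List ℝ → List ℝ
  | prev, [] => [prev]
  | prev, x :: xs => (prev - r * x) :: mulAux r x xs

lemma mulAux_nil (r prev : ℝ) : mulAux r prev [] = [prev] := rfl
lemma mulAux_cons (r prev x : ℝ) (xs : List ℝ) :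
    mulAux r prev (x :: xs) = (prev - r * x) :: mulAux r x xs := rfl

lemma signVar_cons_cons_zero (x : ℝ) (l : List ℝ) :
    signVar (x :: 0 :: l) = signVar (x :: l) := by
  by_cases hx : x = 0
  · subst hx; simp only [signVar_cons_zero]
  · rw [signVar_cons x hx, signVar_cons x hx, fns_cons_zero, signVar_cons_zero]

lemma key (r : ℝ) (hr : 0 < r) (l : List ℝ) (h : lst l ≠ 0) :
    (signVar l + 1 ≤ signVar (mulAux r 0 l) ∧ fns (mulAux r 0 l) * fns l < 0) ∧
    (∀ prev, prev ≠ 0 → signVar (prev :: l) + 1 ≤ signVar (mulAux r prev l) ∨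
      (signVar (prev :: l) ≤ signVar (mulAux r prev l) ∧ 0 < fns (mulAux r prev l) * prev)) := by
  induction l with
  | nil => exact absurd rfl h
  | cons y ys ih =>
    by_cases hys : ys = []
    · -- base case: l = [y], y ≠ 0
      subst hys
      have hy : y ≠ 0 := by rwa [lst_singleton] at h
      have hy2 := mul_self_pos.2 hy
      constructor
      · rw [mulAux_cons, mulAux_nil]
        have hb0 : 0 - r * y ≠ 0 := by intro hc; apply hy; nlinarith
        have hbn : (0 - r * y) * y < 0 := by nlinarith
        rw [signVar_single, signVar_pair _ y hb0 hy, if_pos hbn, fns_cons _ hb0,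
          fns_single y hy]
        exact ⟨le_refl _, by nlinarith⟩
      · intro prev hprev
        have hp2 := mul_self_pos.2 hprev
        rw [mulAux_cons, mulAux_nil, signVar_cons prev hprev, fns_single y hy,
          signVar_single]
        rcases lt_trichotomy (prev * y) 0 with hc | hc | hc
        · right
          have hb0 : prev - r * y ≠ 0 := by intro hc2; nlinarith [mul_pos hr hy2]
          have hbp : 0 < (prev - r * y) * prev := by nlinarith
          have hbn : (prev - r * y) * y < 0 := by nlinarith
          rw [signVar_pair _ y hb0 hy, if_pos hbn, if_pos hc, fns_cons _ hb0]
          exact ⟨le_refl _, hbp⟩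
        · exact absurd (mul_eq_zero.1 hc) (by push_neg; exact ⟨hprev, hy⟩)
        · rw [if_neg (by linarith)]
          rcases lt_trichotomy ((prev - r * y) * prev) 0 with hb | hb | hb
          · left
            have hb0 : prev - r * y ≠ 0 := by intro hc2; rw [hc2] at hb; simp at hb
            have hbn : (prev - r * y) * y < 0 := by nlinarith
            rw [signVar_pair _ y hb0 hy, if_pos hbn]
            all_goals omega
          · have hb0 : prev - r * y = 0 := by
              rcases mul_eq_zero.1 hb with h' | h'
              · exact h'
              · exact absurd h' hprev
            right
            rw [hb0, signVar_cons_zero, signVar_single, fns_cons_zero, fns_single y hy]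
            exact ⟨by omega, by nlinarith⟩
          · right
            have hb0 : prev - r * y ≠ 0 := by intro hc2; rw [hc2] at hb; simp at hb
            rw [fns_cons _ hb0, signVar_pair _ y hb0 hy]
            exact ⟨by split <;> omega, hb⟩
    · -- inductive step: ys ≠ []
      have hlys : lst ys ≠ 0 := by rwa [lst_cons y ys hys] at h
      obtain ⟨⟨IHA1, IHA2⟩, IHB⟩ := ih hlys
      have hfys : fns ys ≠ 0 := fns_ne_zero ys hlys
      have hfys2 := mul_self_pos.2 hfys
      constructor
      · -- part A, prev = 0
        rw [mulAux_cons]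
        by_cases hy : y = 0
        · subst hy
          have e0 : (0:ℝ) - r * 0 = 0 := by ring
          rw [e0, signVar_cons_zero, fns_cons_zero, signVar_cons_zero, fns_cons_zero]
          exact ⟨IHA1, IHA2⟩
        · have hy2 := mul_self_pos.2 hy
          have hb0 : 0 - r * y ≠ 0 := by intro hc; apply hy; nlinarith
          rw [fns_cons _ hb0, fns_cons y hy]
          refine ⟨?_, by nlinarith⟩
          rcases IHB y hy with h1 | ⟨h1, h2⟩
          · calc signVar (y :: ys) + 1 ≤ signVar (mulAux r y ys) := h1
              _ ≤ signVar ((0 - r * y) :: mulAux r y ys) := signVar_le_cons _ _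
          · have hneg : (0 - r * y) * fns (mulAux r y ys) < 0 := by nlinarith
            rw [signVar_cons _ hb0, if_pos hneg]
            omega
      · -- part B
        intro prev hprev
        have hp2 := mul_self_pos.2 hprev
        rw [mulAux_cons]
        by_cases hy : y = 0
        · subst hy
          have e0 : prev - r * 0 = prev := by ring
          have hfB : fns (mulAux r 0 ys) ≠ 0 := by
            intro hc; rw [hc] at IHA2; simp at IHA2
          rw [e0, signVar_cons_cons_zero, signVar_cons prev hprev,
            signVar_cons prev hprev, fns_cons prev hprev]
          rcases lt_trichotomy (prev * fns ys) 0 with hc | hc | hc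
          · right
            have hpb : 0 < fns (mulAux r 0 ys) * prev := by nlinarith
            rw [if_pos hc, if_neg (by nlinarith : ¬ prev * fns (mulAux r 0 ys) < 0)]
            exact ⟨by omega, hp2⟩
          · exact absurd (mul_eq_zero.1 hc) (by push_neg; exact ⟨hprev, hfys⟩)
          · left
            have hpb : prev * fns (mulAux r 0 ys) < 0 := by nlinarith
            rw [if_neg (by linarith), if_pos hpb]
            omega
        · -- y ≠ 0
          have hy2 := mul_self_pos.2 hy
          rw [signVar_cons prev hprev, fns_cons y hy]
          rcases lt_trichotomy (prev * y) 0 with hc | hc | hc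
          · right
            have hb0 : prev - r * y ≠ 0 := by intro hc2; nlinarith [mul_pos hr hy2]
            have hbp : 0 < (prev - r * y) * prev := by nlinarith
            rw [fns_cons _ hb0, if_pos hc]
            refine ⟨?_, hbp⟩
            rcases IHB y hy with h1 | ⟨h1, h2⟩
            · calc signVar (y :: ys) + 1 ≤ signVar (mulAux r y ys) := h1
                _ ≤ signVar ((prev - r * y) :: mulAux r y ys) := signVar_le_cons _ _
            · have hfB : fns (mulAux r y ys) ≠ 0 := by
                intro hc2; rw [hc2] at h2; simp at h2
              have h3 : (prev - r * y) * fns (mulAux r y ys) < 0 := by nlinarith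
              rw [signVar_cons _ hb0, if_pos h3]
              omega
          · exact absurd (mul_eq_zero.1 hc) (by push_neg; exact ⟨hprev, hy⟩)
          · rw [if_neg (by linarith)]
            rcases IHB y hy with h1 | ⟨h1, h2⟩
            · left
              calc signVar (y :: ys) + 0 + 1 ≤ signVar (mulAux r y ys) := by omega
                _ ≤ signVar ((prev - r * y) :: mulAux r y ys) := signVar_le_cons _ _
            · have hfB : fns (mulAux r y ys) ≠ 0 := by
                intro hc2; rw [hc2] at h2; simp at h2
              have hfB2 := mul_self_pos.2 hfB
              have hBp : 0 < fns (mulAux r y ys) * prev := by nlinarith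
              rcases lt_trichotomy ((prev - r * y) * prev) 0 with hb | hb | hb
              · left
                have hb0 : prev - r * y ≠ 0 := by intro hc2; rw [hc2] at hb; simp at hb
                have h3 : (prev - r * y) * fns (mulAux r y ys) < 0 := by nlinarith
                rw [signVar_cons _ hb0, if_pos h3]
                omega
              · have hb0 : prev - r * y = 0 := by
                  rcases mul_eq_zero.1 hb with h' | h'
                  · exact h'
                  · exact absurd h' hprev
                right
                rw [hb0, signVar_cons_zero, fns_cons_zero]
                exact ⟨by omega, hBp⟩
              · right
                have hb0 : prev - r * y ≠ 0 := by intro hc2; rw [hc2] at hb; simp at hb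
                rw [fns_cons _ hb0, signVar_cons _ hb0]
                exact ⟨by omega, hb⟩

open Polynomial

noncomputable def coeffList (f : ℝ[X]) : List ℝ := (List.range (f.natDegree + 1)).map f.coeff

lemma coeffList_getD (f : ℝ[X]) (i : ℕ) : (coeffList f).getD i 0 = f.coeff i := by
  unfold coeffList
  by_cases h : i < f.natDegree + 1
  · rw [List.getD_eq_getElem _ _ (by simpa using h)]
    simp
  · rw [List.getD_eq_default _ _ (by simpa using h)]
    exact (Polynomial.coeff_eq_zero_of_natDegree_lt (by omega)).symm

lemma length_mulAux (r : ℝ) (l : List ℝ) : ∀ prev, (mulAux r prev l).length = l.length + 1 := by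
  induction l with
  | nil => intro prev; rfl
  | cons x xs ih => intro prev; simp [mulAux, ih x]

lemma mulAux_getD (r : ℝ) (l : List ℝ) : ∀ prev i, (mulAux r prev l).getD i 0 =
    (if i = 0 then prev else l.getD (i - 1) 0) - r * l.getD i 0 := by
  induction l with
  | nil =>
      intro prev i
      cases i with
      | zero => simp [mulAux]
      | succ j => simp [mulAux]
  | cons x xs ih =>
      intro prev i
      cases i with
      | zero => simp [mulAux]
      | succ j =>
          show (mulAux r x xs).getD j 0 = _
          rw [ih x j]
          cases j with
          | zero => simp
          | succ k => simp

lemma coeffList_mul (f : ℝ[X]) (hf : f ≠ 0) (r : ℝ) :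
    coeffList ((X - C r) * f) = mulAux r 0 (coeffList f) := by
  have hX : (X - C r : ℝ[X]) ≠ 0 := X_sub_C_ne_zero r
  have hdeg : ((X - C r) * f).natDegree = f.natDegree + 1 := by
    rw [natDegree_mul hX hf, natDegree_X_sub_C]; omega
  have hlen : (coeffList ((X - C r) * f)).length = (mulAux r 0 (coeffList f)).length := by
    simp [coeffList, hdeg, length_mulAux]
  apply List.ext_getElem hlen
  intro i h1 h2
  rw [← List.getD_eq_getElem _ 0 h1, ← List.getD_eq_getElem _ 0 h2]
  rw [coeffList_getD, mulAux_getD]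
  have hexp : (X - C r) * f = X * f - C r * f := by ring
  rw [hexp, coeff_sub, coeff_C_mul]
  simp only [coeffList_getD]
  cases i with
  | zero => simp [mul_coeff_zero, coeff_X_zero]
  | succ j => rw [coeff_X_mul]; simp

lemma lst_concat (l : List ℝ) (a : ℝ) : lst (l ++ [a]) = a := by
  simp [lst, List.getLastD_eq_getLast?, List.getLast?_concat]

lemma lst_coeffList (f : ℝ[X]) : lst (coeffList f) = f.leadingCoeff := by
  unfold coeffList
  rw [List.range_succ, List.map_append, List.map_singleton, lst_concat]
  rfl

lemma fns_coeffList (f : ℝ[X]) (h0 : f.coeff 0 ≠ 0) : fns (coeffList f) = f.coeff 0 := by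
  unfold coeffList
  rw [List.range_succ_eq_map, List.map_cons]
  exact fns_cons _ h0 _

lemma Zgt_mul (f : ℝ[X]) (hf : f ≠ 0) (r : ℝ) (hr : 0 < r) :
    Zgt ((X - C r) * f) 0 = Zgt f 0 + 1 := by
  have hX : (X - C r : ℝ[X]) ≠ 0 := X_sub_C_ne_zero r
  unfold Zgt
  rw [roots_mul (mul_ne_zero hX hf), roots_X_sub_C, Multiset.filter_add,
    Multiset.filter_singleton, if_pos hr, Multiset.card_add, Multiset.card_singleton]
  omega

lemma exists_pos_root (f : ℝ[X]) (h : Zgt f 0 ≠ 0) : ∃ r ∈ f.roots, 0 < r := by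
  unfold Zgt at h
  obtain ⟨r, hr⟩ := Multiset.card_pos_iff_exists_mem.1 (Nat.pos_of_ne_zero h)
  rw [Multiset.mem_filter] at hr
  exact ⟨r, hr.1, by simpa using hr.2⟩

lemma pos_aux (f : ℝ[X]) (hl : 0 < f.leadingCoeff) (h0 : f.eval 0 ≠ 0)
    (hz : Zgt f 0 = 0) : 0 < f.eval 0 := by
  have hf : f ≠ 0 := leadingCoeff_ne_zero.1 (ne_of_gt hl)
  by_contra hneg
  have hneg' : f.eval 0 < 0 := lt_of_le_of_ne (le_of_not_gt hneg) h0
  rcases Nat.eq_zero_or_pos f.natDegree with hd | hd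
  · have : f.leadingCoeff = f.eval 0 := by
      rw [Polynomial.leadingCoeff, hd, Polynomial.coeff_zero_eq_eval_zero]
    linarith [this ▸ hl]
  · have hdeg : 0 < f.degree := natDegree_pos_iff_degree_pos.1 hd
    have hT := Polynomial.tendsto_atTop_of_leadingCoeff_nonneg f hdeg (le_of_lt hl)
    obtain ⟨M, hM1, hM2⟩ := ((hT.eventually_gt_atTop 0).and (Filter.eventually_gt_atTop 0)).exists
    have hmem : (0:ℝ) ∈ Set.Ioo (f.eval 0) (f.eval M) := ⟨hneg', hM1⟩
    have hsub := intermediate_value_Ioo (le_of_lt hM2)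
      (f.continuous_aeval.continuousOn : ContinuousOn (fun x => f.eval x) (Set.Icc 0 M))
    obtain ⟨c, hc1, hc2⟩ := hsub hmem
    have hcr : c ∈ f.roots.filter (fun x => (0:ℝ) < x) := by
      rw [Multiset.mem_filter]
      refine ⟨(Polynomial.mem_roots hf).2 ?_, by simpa using hc1.1⟩
      exact hc2
    have : Zgt f 0 ≠ 0 := by
      unfold Zgt
      intro hcard
      rw [Multiset.card_eq_zero] at hcard
      rw [hcard] at hcr
      simp at hcr
    exact this hz

lemma sign_of_no_pos_roots (f : ℝ[X]) (h0 : f.eval 0 ≠ 0) (hz : Zgt f 0 = 0) :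
    0 < f.eval 0 * f.leadingCoeff := by
  have hf : f ≠ 0 := fun h => h0 (by simp [h])
  have hl : f.leadingCoeff ≠ 0 := leadingCoeff_ne_zero.2 hf
  rcases lt_trichotomy f.leadingCoeff 0 with h | h | h
  · have h1 : (0:ℝ) < (-f).leadingCoeff := by rw [leadingCoeff_neg]; linarith
    have h2 : (-f).eval 0 ≠ 0 := by simpa using h0
    have h3 : Zgt (-f) 0 = 0 := by unfold Zgt at hz ⊢; rw [Polynomial.roots_neg]; exact hz
    have := pos_aux (-f) h1 h2 h3
    rw [eval_neg] at this
    nlinarith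
  · exact absurd h hl
  · nlinarith [pos_aux f h h0 hz]

lemma even_Zgt_iff : ∀ (N : ℕ) (f : ℝ[X]), Zgt f 0 = N → f.eval 0 ≠ 0 →
    (Even (Zgt f 0) ↔ 0 < f.eval 0 * f.leadingCoeff) := by
  intro N
  induction N with
  | zero =>
      intro f hz h0
      rw [hz]
      simp only [Even.zero, true_iff]
      exact sign_of_no_pos_roots f h0 hz
  | succ N ih =>
      intro f hz h0
      have hf : f ≠ 0 := fun h => h0 (by simp [h])
      obtain ⟨r, hrm, hr⟩ := exists_pos_root f (by omega)
      have hdvd : (X - C r) ∣ f := dvd_iff_isRoot.2 ((mem_roots hf).1 hrm)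
      obtain ⟨g, hg⟩ := hdvd
      have hgne : g ≠ 0 := fun h => hf (by rw [hg, h, mul_zero])
      have hZ : Zgt f 0 = Zgt g 0 + 1 := by rw [hg]; exact Zgt_mul g hgne r hr
      have heval : f.eval 0 = -r * g.eval 0 := by rw [hg, eval_mul, eval_sub, eval_X, eval_C]; ring
      have hg0 : g.eval 0 ≠ 0 := by
        intro h; rw [heval, h, mul_zero] at h0; exact h0 rfl
      have hlead : f.leadingCoeff = g.leadingCoeff := by
        rw [hg, leadingCoeff_mul, (monic_X_sub_C r).leadingCoeff, one_mul]
      have ihg := ih g (by omega) hg0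
      rw [hZ, Nat.even_add_one, ihg, heval, hlead]
      have hgl : g.eval 0 * g.leadingCoeff ≠ 0 :=
        mul_ne_zero hg0 (leadingCoeff_ne_zero.2 hgne)
      constructor
      · intro h1
        have h2 : g.eval 0 * g.leadingCoeff < 0 := lt_of_le_of_ne (le_of_not_gt h1) hgl
        nlinarith
      · intro h1 h2
        nlinarith

lemma Z_le_V : ∀ (N : ℕ) (f : ℝ[X]), Zgt f 0 = N → f.eval 0 ≠ 0 →
    Zgt f 0 ≤ signVar (coeffList f) := by
  intro N
  induction N with
  | zero => intro f hz _; omega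
  | succ N ih =>
      intro f hz h0
      have hf : f ≠ 0 := fun h => h0 (by simp [h])
      obtain ⟨r, hrm, hr⟩ := exists_pos_root f (by omega)
      have hdvd : (X - C r) ∣ f := dvd_iff_isRoot.2 ((mem_roots hf).1 hrm)
      obtain ⟨g, hg⟩ := hdvd
      have hgne : g ≠ 0 := fun h => hf (by rw [hg, h, mul_zero])
      have hZ : Zgt f 0 = Zgt g 0 + 1 := by rw [hg]; exact Zgt_mul g hgne r hr
      have heval : f.eval 0 = -r * g.eval 0 := by rw [hg, eval_mul, eval_sub, eval_X, eval_C]; ring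
      have hg0 : g.eval 0 ≠ 0 := by
        intro h; rw [heval, h, mul_zero] at h0; exact h0 rfl
      have hlst : lst (coeffList g) ≠ 0 := by
        rw [lst_coeffList]; exact leadingCoeff_ne_zero.2 hgne
      have hkey := (key r hr (coeffList g) hlst).1.1
      have hcl : coeffList f = mulAux r 0 (coeffList g) := by
        rw [hg]; exact coeffList_mul g hgne r
      rw [hcl, hZ]
      have := ih g (by omega) hg0
      omega

end Desc

open Desc Polynomial

theorem descartes_rule_of_signs (n : ℕ) (f : Polynomial ℝ)
    (hdeg : f.natDegree = n) (h0 : f.eval 0 ≠ 0) :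
    ∃ ν : ℕ, Even ν ∧
      (Zgt f 0 : ℤ) = (signVar ((List.range (n + 1)).map f.coeff) : ℤ) - ν := by
  subst hdeg
  have hrw : (List.range (f.natDegree + 1)).map f.coeff = Desc.coeffList f := rfl
  rw [hrw]
  have hf : f ≠ 0 := fun h => h0 (by simp [h])
  have hc0 : f.coeff 0 ≠ 0 := by rwa [Polynomial.coeff_zero_eq_eval_zero]
  have hZV := Z_le_V (Zgt f 0) f rfl h0
  have hlst : lst (Desc.coeffList f) ≠ 0 := by
    rw [lst_coeffList]; exact leadingCoeff_ne_zero.2 hf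
  have hV : Even (signVar (Desc.coeffList f)) ↔ 0 < f.eval 0 * f.leadingCoeff := by
    rw [even_signVar_iff _ hlst, fns_coeffList f hc0, lst_coeffList,
      Polynomial.coeff_zero_eq_eval_zero]
  have hZ := even_Zgt_iff (Zgt f 0) f rfl h0
  refine ⟨signVar (Desc.coeffList f) - Zgt f 0, (Nat.even_sub hZV).2 (by rw [hV, hZ]), ?_⟩
  rw [Nat.cast_sub hZV]
  ring
end

section
/- Let f(x) be a polynomial with real coefficients of degree n with f(0) ≠ 0. If the number of sign variations V^{(n)}_f(0) in the coefficient sequence of f equals 1, then f has exactly one positive real root λ, and λ is a simple root. -/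
namespace DescartesAux

open Classical in
noncomputable def sv : List ℝ → ℕ
  | [] => 0
  | a :: t =>
    (match t with
     | [] => 0
     | b :: _ => if a * b < 0 then 1 else 0) + sv t

lemma sv_nil : sv [] = 0 := rfl

lemma sv_singleton (a : ℝ) : sv [a] = 0 := by simp [sv]

lemma sv_cons₂ (a b : ℝ) (t : List ℝ) :
    sv (a :: b :: t) = (if a * b < 0 then 1 else 0) + sv (b :: t) := by
  rw [sv]

lemma sv_eq_countP : ∀ l : List ℝ,
    (l.zip l.tail).countP (fun p => decide (p.1 * p.2 < 0)) = sv l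
  | [] => rfl
  | [_] => rfl
  | a :: b :: t => by
    have ih := sv_eq_countP (b :: t)
    rw [sv_cons₂, ← ih]
    simp only [List.tail_cons, List.zip_cons_cons, List.countP_cons]
    by_cases h : a * b < 0 <;> simp [h] <;> omega

lemma signVar_eq_sv (l : List ℝ) : signVar l = sv (l.filter (fun x => decide (x ≠ 0))) := by
  unfold signVar
  exact sv_eq_countP _

lemma sv_neg : ∀ l : List ℝ, sv (l.map (fun x => -x)) = sv l
  | [] => rfl
  | [a] => by simp [sv_singleton]
  | a :: b :: t => by
    have ih := sv_neg (b :: t)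
    simp only [List.map_cons] at ih ⊢
    rw [sv_cons₂, sv_cons₂, ih, neg_mul_neg]

lemma signVar_neg (l : List ℝ) : signVar (l.map (fun x => -x)) = signVar l := by
  rw [signVar_eq_sv, signVar_eq_sv, List.filter_map]
  have h : ((fun x => decide (x ≠ 0)) ∘ (fun x : ℝ => -x)) = (fun x => decide (x ≠ 0)) := by
    funext x; simp
  rw [h, sv_neg]

lemma sv_zero_pos : ∀ (l : List ℝ) (a : ℝ), (∀ x ∈ a :: l, x ≠ 0) → 0 < a →
    sv (a :: l) = 0 → ∀ x ∈ a :: l, 0 < x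
  | [], a, _, ha, _, x, hx => by
    rw [List.mem_singleton] at hx; subst hx; exact ha
  | b :: t, a, hnz, ha, hsv, x, hx => by
    rw [sv_cons₂] at hsv
    have hab : ¬ a * b < 0 := by
      intro h; simp [h] at hsv
    have hb : b ≠ 0 := hnz b (by simp)
    have hbpos : 0 < b := by
      rcases lt_or_gt_of_ne hb with h | h
      · exact absurd (mul_neg_of_pos_of_neg ha h) hab
      · exact h
    have hsv' : sv (b :: t) = 0 := by omega
    rw [List.mem_cons] at hx
    rcases hx with rfl | hx
    · exact ha
    · exact sv_zero_pos t b (fun y hy => hnz y (List.mem_cons_of_mem _ hy)) hbpos hsv' x hx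

lemma sv_one_structure : ∀ (l : List ℝ) (a : ℝ), (∀ x ∈ a :: l, x ≠ 0) → a < 0 →
    sv (a :: l) = 1 → ∃ l1 l2 : List ℝ, a :: l = l1 ++ l2 ∧ (∀ x ∈ l1, x < 0) ∧
      (∀ x ∈ l2, 0 < x) ∧ l2 ≠ []
  | [], a, _, _, hsv => by simp [sv_singleton] at hsv
  | b :: t, a, hnz, ha, hsv => by
    rw [sv_cons₂] at hsv
    have hb : b ≠ 0 := hnz b (by simp)
    by_cases hab : a * b < 0
    · have hbpos : 0 < b := by
        rcases lt_or_gt_of_ne hb with h | h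
        · exact absurd hab (not_lt.mpr (le_of_lt (mul_pos_of_neg_of_neg ha h)))
        · exact h
      have hsv' : sv (b :: t) = 0 := by simp [hab] at hsv; omega
      refine ⟨[a], b :: t, by simp, by simp [ha], ?_, by simp⟩
      exact sv_zero_pos t b (fun y hy => hnz y (List.mem_cons_of_mem _ hy)) hbpos hsv'
    · have hbneg : b < 0 := by
        rcases lt_or_gt_of_ne hb with h | h
        · exact h
        · exact absurd (mul_neg_of_neg_of_pos ha h) hab
      have hsv' : sv (b :: t) = 1 := by simp [hab] at hsv; omega
      obtain ⟨l1, l2, heq, h1, h2, h3⟩ :=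
        sv_one_structure t b (fun y hy => hnz y (List.mem_cons_of_mem _ hy)) hbneg hsv'
      refine ⟨a :: l1, l2, by simp [heq], ?_, h2, h3⟩
      intro x hx
      rw [List.mem_cons] at hx
      rcases hx with rfl | hx
      · exact ha
      · exact h1 x hx

lemma threshold (n : ℕ) (f : Polynomial ℝ) (hdeg : f.natDegree = n) (h00 : f.coeff 0 < 0)
    (hV : signVar ((List.range (n + 1)).map f.coeff) = 1) :
    ∃ k : ℕ, 0 < k ∧ k ≤ n ∧
      ∀ i : ℕ, f.coeff i ≠ 0 → (i < k → f.coeff i < 0) ∧ (k ≤ i → 0 < f.coeff i) := by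
  set I : List ℕ := (List.range (n + 1)).filter (fun i => decide (f.coeff i ≠ 0)) with hI
  have hmemI : ∀ i : ℕ, i ∈ I ↔ (i < n + 1 ∧ f.coeff i ≠ 0) := by
    intro i
    simp [hI, List.mem_filter, List.mem_range]
  have hVI : sv (I.map f.coeff) = 1 := by
    rw [signVar_eq_sv, List.filter_map] at hV
    exact hV
  -- I starts with 0
  have h0I : 0 ∈ I := (hmemI 0).mpr ⟨Nat.succ_pos n, h00.ne⟩
  have hIcons : I = 0 :: (((List.range n).filter (fun i => decide (f.coeff (i + 1) ≠ 0))).map Nat.succ) := by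
    rw [hI, List.range_succ_eq_map, List.filter_cons_of_pos (by simp [h00.ne]), List.filter_map]
    rfl
  have hnz : ∀ x ∈ I.map f.coeff, x ≠ 0 := by
    intro x hx
    obtain ⟨i, hi, rfl⟩ := List.mem_map.mp hx
    exact ((hmemI i).mp hi).2
  have hmapcons : I.map f.coeff = f.coeff 0 :: ((((List.range n).filter
      (fun i => decide (f.coeff (i + 1) ≠ 0))).map Nat.succ).map f.coeff) := by
    rw [hIcons]; rfl
  obtain ⟨l1, l2, heq, h1, h2, h3⟩ := sv_one_structure _ (f.coeff 0)
    (hmapcons ▸ hnz) h00 (hmapcons ▸ hVI)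
  rw [← hmapcons] at heq
  obtain ⟨I1, I2, heqI, hm1, hm2⟩ := List.map_eq_append_iff.mp heq
  have hI2ne : I2 ≠ [] := by
    intro h; rw [h] at hm2; exact h3 hm2.symm
  set k := I2.head hI2ne with hk
  have hkI2 : k ∈ I2 := List.head_mem hI2ne
  have hpair : I.Pairwise (· < ·) :=
    (List.pairwise_lt_range (n := n + 1)).filter _
  rw [heqI, List.pairwise_append] at hpair
  obtain ⟨hp1, hp2, hcross⟩ := hpair
  have hk_le : ∀ j ∈ I2, k ≤ j := by
    intro j hj
    rw [← List.cons_head_tail hI2ne] at hj hp2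
    rcases List.mem_cons.mp hj with rfl | hj
    · exact le_refl _
    · exact le_of_lt ((List.pairwise_cons.mp hp2).1 j hj)
  have hI1_lt : ∀ i ∈ I1, i < k := fun i hi => hcross i hi k hkI2
  have hthresh : ∀ i : ℕ, f.coeff i ≠ 0 →
      (i < k → f.coeff i < 0) ∧ (k ≤ i → 0 < f.coeff i) := by
    intro i hi
    have hin : i ≤ n := by
      by_contra h
      exact hi (Polynomial.coeff_eq_zero_of_natDegree_lt (hdeg ▸ Nat.lt_of_not_le h))
    have hiI : i ∈ I1 ∨ i ∈ I2 := by
      have := (hmemI i).mpr ⟨Nat.lt_succ_of_le hin, hi⟩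
      rw [heqI] at this
      exact List.mem_append.mp this
    constructor
    · intro hik
      have hiI1 : i ∈ I1 := by
        rcases hiI with h | h
        · exact h
        · exact absurd (hk_le i h) (Nat.not_le.mpr hik)
      exact h1 _ (hm1 ▸ List.mem_map_of_mem (f := f.coeff) hiI1)
    · intro hki
      have hiI2 : i ∈ I2 := by
        rcases hiI with h | h
        · exact absurd hki (Nat.not_le.mpr (hI1_lt i h))
        · exact h
      exact h2 _ (hm2 ▸ List.mem_map_of_mem (f := f.coeff) hiI2)
  refine ⟨k, ?_, ?_, hthresh⟩
  · by_contra h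
    have : 0 < f.coeff 0 := (hthresh 0 h00.ne).2 (by omega)
    linarith
  · have : k ∈ I := heqI ▸ List.mem_append_right I1 hkI2
    exact Nat.lt_succ_iff.mp ((hmemI k).mp this).1

lemma main (n : ℕ) (f : Polynomial ℝ) (hdeg : f.natDegree = n) (h00 : f.coeff 0 < 0)
    (hth' : ∃ k : ℕ, 0 < k ∧ k ≤ n ∧
      ∀ i : ℕ, f.coeff i ≠ 0 → (i < k → f.coeff i < 0) ∧ (k ≤ i → 0 < f.coeff i)) :
    ∃ l : ℝ, 0 < l ∧ f.eval l = 0 ∧ Polynomial.rootMultiplicity l f = 1 ∧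
      ∀ x : ℝ, 0 < x → f.eval x = 0 → x = l := by
  obtain ⟨k, hk0, hkn, hth⟩ := hth'
  have hfne : f ≠ 0 := fun h => by simp [h] at h00
  have hn0 : 0 < f.coeff n := by
    refine (hth n ?_).2 hkn
    rw [← hdeg]
    exact Polynomial.leadingCoeff_ne_zero.mpr hfne
  set H : ℝ → ℝ := fun x => ∑ i ∈ Finset.range (n + 1), f.coeff i * x ^ ((i : ℤ) - k) with hH
  have key : ∀ x : ℝ, 0 < x → f.eval x = x ^ k * H x := by
    intro x hx
    have hxne : x ≠ 0 := ne_of_gt hx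
    have h1 : f.eval x = ∑ i ∈ Finset.range (n + 1), f.coeff i * x ^ i := by
      rw [Polynomial.eval_eq_sum_range, hdeg]
    rw [h1, hH, Finset.mul_sum]
    refine Finset.sum_congr rfl fun i _ => ?_
    rw [show x ^ k = x ^ (k : ℤ) from (zpow_natCast x k).symm,
      show x ^ i = x ^ (i : ℤ) from (zpow_natCast x i).symm,
      show (i : ℤ) = (k : ℤ) + ((i : ℤ) - k) by ring, zpow_add₀ hxne]
    ring
  -- monotonicity helpers
  have hcoeff_sign : ∀ i : ℕ, (i < k → f.coeff i ≤ 0) ∧ (k ≤ i → 0 ≤ f.coeff i) := by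
    intro i
    rcases eq_or_ne (f.coeff i) 0 with h | h
    · exact ⟨fun _ => le_of_eq h, fun _ => ge_of_eq h⟩
    · exact ⟨fun hi => ((hth i h).1 hi).le, fun hi => ((hth i h).2 hi).le⟩
  have hzle : ∀ (x y : ℝ), 0 < x → x < y → ∀ i ∈ Finset.range (n + 1),
      f.coeff i * x ^ ((i : ℤ) - k) ≤ f.coeff i * y ^ ((i : ℤ) - k) := by
    intro x y hx hxy i _
    have hy : 0 < y := hx.trans hxy
    rcases le_or_gt (k : ℤ) i with hki | hik
    · -- nonnegative exponent
      have hm : (i : ℤ) - k = ((i - k : ℕ) : ℤ) := by omega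
      rw [hm, zpow_natCast, zpow_natCast]
      refine mul_le_mul_of_nonneg_left ?_ ((hcoeff_sign i).2 (by exact_mod_cast hki))
      exact pow_le_pow_left₀ hx.le hxy.le _
    · -- negative exponent
      have hm : (i : ℤ) - k = -((k - i : ℕ) : ℤ) := by omega
      rw [hm, zpow_neg, zpow_neg, zpow_natCast, zpow_natCast]
      refine mul_le_mul_of_nonpos_left ?_ ((hcoeff_sign i).1 (by exact_mod_cast hik))
      exact inv_anti₀ (pow_pos hx _) (pow_le_pow_left₀ hx.le hxy.le _)
  have hmono : ∀ (x y : ℝ), 0 < x → x < y → H x < H y := by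
    intro x y hx hxy
    refine Finset.sum_lt_sum (hzle x y hx hxy) ⟨0, Finset.mem_range.mpr (Nat.succ_pos n), ?_⟩
    have hm : ((0 : ℕ) : ℤ) - k = -((k : ℕ) : ℤ) := by omega
    rw [hm, zpow_neg, zpow_neg, zpow_natCast, zpow_natCast]
    refine mul_lt_mul_of_neg_left ?_ h00
    exact inv_strictAnti₀ (pow_pos hx _) (pow_lt_pow_left₀ hxy hx.le hk0.ne')
  -- existence of a root
  have hdegpos : 0 < f.degree := by
    rw [Polynomial.degree_eq_natDegree hfne, hdeg]
    exact_mod_cast Nat.lt_of_lt_of_le hk0 hkn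
  have hlead : 0 ≤ f.leadingCoeff := by
    rw [Polynomial.leadingCoeff, hdeg]; exact hn0.le
  have htend := Polynomial.tendsto_atTop_of_leadingCoeff_nonneg f hdegpos hlead
  obtain ⟨M, hM1, hM2⟩ :=
    ((htend.eventually_gt_atTop 0).and (Filter.eventually_gt_atTop 0)).exists
  have he0 : f.eval 0 < 0 := by rw [← Polynomial.coeff_zero_eq_eval_zero]; exact h00
  have hmem : (0 : ℝ) ∈ Set.Ioo (f.eval 0) (f.eval M) := ⟨he0, hM1⟩
  obtain ⟨l, hlmem, hleval⟩ :=
    intermediate_value_Ioo hM2.le (f.continuous.continuousOn) hmem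
  have hl0 : 0 < l := hlmem.1
  have hlne : l ≠ 0 := ne_of_gt hl0
  have hzero_of_eval : ∀ x : ℝ, 0 < x → f.eval x = 0 → H x = 0 := by
    intro x hx hfx
    have h1 := key x hx
    rw [hfx] at h1
    exact ((mul_eq_zero.mp h1.symm).resolve_left (pow_ne_zero _ (ne_of_gt hx)))
  have hHl : H l = 0 := hzero_of_eval l hl0 hleval
  have huniq : ∀ x : ℝ, 0 < x → f.eval x = 0 → x = l := by
    intro x hx hfx
    have hHx : H x = 0 := hzero_of_eval x hx hfx
    rcases lt_trichotomy x l with h | h | h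
    · exact absurd (hmono x l hx h) (by rw [hHx, hHl]; exact lt_irrefl 0)
    · exact h
    · exact absurd (hmono l x hl0 h) (by rw [hHx, hHl]; exact lt_irrefl 0)
  -- derivative computation
  set D : ℝ := ∑ i ∈ Finset.range (n + 1),
      f.coeff i * ((((i : ℤ) - k : ℤ) : ℝ) * l ^ ((i : ℤ) - k - 1)) with hD
  have hDd : HasDerivAt H D l := by
    rw [hH, hD]
    exact HasDerivAt.fun_sum fun i _ =>
      (hasDerivAt_zpow ((i : ℤ) - k) l (Or.inl hlne)).const_mul (f.coeff i)
  have hDpos : 0 < D := by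
    rw [hD]
    refine Finset.sum_pos' (fun i _ => ?_) ⟨0, Finset.mem_range.mpr (Nat.succ_pos n), ?_⟩
    · rcases le_or_gt k i with hki | hik
      · have h1 : 0 ≤ f.coeff i := (hcoeff_sign i).2 hki
        have h2 : (0 : ℝ) ≤ (((i : ℤ) - k : ℤ) : ℝ) := by
          exact_mod_cast (by omega : (0 : ℤ) ≤ (i : ℤ) - k)
        exact mul_nonneg h1 (mul_nonneg h2 (zpow_pos hl0 _).le)
      · have h1 : f.coeff i ≤ 0 := (hcoeff_sign i).1 hik
        have h2 : (((i : ℤ) - k : ℤ) : ℝ) ≤ 0 := by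
          exact_mod_cast (by omega : (i : ℤ) - k ≤ 0)
        have h3 : (0 : ℝ) < l ^ ((i : ℤ) - k - 1) := zpow_pos hl0 _
        nlinarith [mul_nonneg (neg_nonneg.mpr h1) (mul_nonneg (neg_nonneg.mpr h2) h3.le)]
    · have h2 : ((((0 : ℕ) : ℤ) - k : ℤ) : ℝ) < 0 := by
        exact_mod_cast (by omega : ((0 : ℕ) : ℤ) - k < 0)
      have h3 : (0 : ℝ) < l ^ (((0 : ℕ) : ℤ) - k - 1) := zpow_pos hl0 _
      exact mul_pos_of_neg_of_neg h00 (mul_neg_of_neg_of_pos h2 h3)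
  have hgd : HasDerivAt (fun x : ℝ => x ^ k * H x)
      ((k : ℝ) * l ^ (k - 1) * H l + l ^ k * D) l :=
    (hasDerivAt_pow k l).mul hDd
  have heqev : (fun x : ℝ => f.eval x) =ᶠ[nhds l] (fun x : ℝ => x ^ k * H x) := by
    filter_upwards [isOpen_Ioi.mem_nhds hl0] with x hx
    exact key x hx
  have hfd : HasDerivAt (fun x : ℝ => f.eval x) (l ^ k * D) l := by
    have heq2 : (k : ℝ) * l ^ (k - 1) * H l + l ^ k * D = l ^ k * D := by
      rw [hHl]; ring
    exact heq2 ▸ hgd.congr_of_eventuallyEq heqev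
  have hderiv : f.derivative.eval l = l ^ k * D := (f.hasDerivAt l).unique hfd
  have hdne : f.derivative.eval l ≠ 0 := by
    rw [hderiv]
    exact (mul_pos (pow_pos hl0 k) hDpos).ne'
  have hm1 : 0 < Polynomial.rootMultiplicity l f :=
    (Polynomial.rootMultiplicity_pos hfne).mpr hleval
  have hm2 : ¬ 1 < Polynomial.rootMultiplicity l f := by
    rw [Polynomial.one_lt_rootMultiplicity_iff_isRoot hfne]
    rintro ⟨-, hd⟩
    exact hdne hd
  exact ⟨l, hl0, hleval, by omega, huniq⟩

end DescartesAux

theorem descartes_one_sign_variation (n : ℕ) (f : Polynomial ℝ)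
    (hdeg : f.natDegree = n) (h0 : f.eval 0 ≠ 0)
    (hV : signVar ((List.range (n + 1)).map f.coeff) = 1) :
    ∃ l : ℝ, 0 < l ∧ f.eval l = 0 ∧ Polynomial.rootMultiplicity l f = 1 ∧
      ∀ x : ℝ, 0 < x → f.eval x = 0 → x = l := by
  have h00 : f.coeff 0 ≠ 0 := by rw [Polynomial.coeff_zero_eq_eval_zero]; exact h0
  have hfne : f ≠ 0 := fun h => h00 (by simp [h])
  rcases lt_or_gt_of_ne h00 with hneg | hpos
  · exact DescartesAux.main n f hdeg hneg (DescartesAux.threshold n f hdeg hneg hV)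
  · set g : Polynomial ℝ := -f with hg
    have hgne : g ≠ 0 := by simp [hg, hfne]
    have hgdeg : g.natDegree = n := by rw [hg, Polynomial.natDegree_neg, hdeg]
    have hg0 : g.coeff 0 < 0 := by
      rw [hg, Polynomial.coeff_neg]; linarith
    have hmapeq : (List.range (n + 1)).map g.coeff =
        ((List.range (n + 1)).map f.coeff).map (fun x => -x) := by
      rw [List.map_map]
      refine List.map_congr_left fun i _ => ?_
      simp [hg]
    have hgV : signVar ((List.range (n + 1)).map g.coeff) = 1 := by
      rw [hmapeq, DescartesAux.signVar_neg, hV]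
    obtain ⟨l, hl0, hle, hlm, hlu⟩ := DescartesAux.main n g hgdeg hg0
      (DescartesAux.threshold n g hgdeg hg0 hgV)
    have heval : ∀ x : ℝ, g.eval x = -f.eval x := by intro x; simp [hg]
    refine ⟨l, hl0, ?_, ?_, ?_⟩
    · have := hle
      rw [heval l, neg_eq_zero] at this
      exact this
    · have hgC : g = Polynomial.C (-1) * f := by
        rw [hg, map_neg, map_one, neg_one_mul]
      rw [hgC, Polynomial.rootMultiplicity_mul (by rw [← hgC]; exact hgne),
        Polynomial.rootMultiplicity_C, zero_add] at hlm
      exact hlm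
    · intro x hx hfx
      exact hlu x hx (by rw [heval x, hfx, neg_zero])
end

section
/- (Gauss's lemma for Descartes's rule) Let h(x) be a nonzero polynomial with real coefficients of degree m with h(0) ≠ 0, let λ > 0 be a real number, and let ℓ(x) = (x - λ) · h(x). Then there exists a nonnegative even integer ν such that V^{(m+1)}_ℓ(0) = V^{(m)}_h(0) + 1 + ν, where V^{(m)}_h(0) and V^{(m+1)}_ℓ(0) denote the numbers of sign variations in the coefficient sequences of h and ℓ, respectively. -/
namespace GD

/-! ### Sign algebra helpers -/

lemma opp_opp {x y z : ℝ} (h1 : x * y < 0) (h2 : y * z < 0) : 0 < x * z := by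
  rcases lt_trichotomy y 0 with hy | hy | hy
  · have hx : 0 < x := by nlinarith
    have hz : 0 < z := by nlinarith
    positivity
  · simp [hy] at h1
  · have hx : x < 0 := by nlinarith
    have hz : z < 0 := by nlinarith
    exact mul_pos_of_neg_of_neg hx hz

lemma opp_same {x y z : ℝ} (h1 : x * y < 0) (h2 : 0 < y * z) : x * z < 0 := by
  rcases lt_trichotomy y 0 with hy | hy | hy
  · have hx : 0 < x := by nlinarith
    have hz : z < 0 := by nlinarith
    exact mul_neg_of_pos_of_neg hx hz
  · simp [hy] at h1
  · have hx : x < 0 := by nlinarith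
    have hz : 0 < z := by nlinarith
    exact mul_neg_of_neg_of_pos hx hz

lemma same_opp {x y z : ℝ} (h1 : 0 < x * y) (h2 : y * z < 0) : x * z < 0 := by
  rcases lt_trichotomy y 0 with hy | hy | hy
  · have hx : x < 0 := by nlinarith
    have hz : 0 < z := by nlinarith
    exact mul_neg_of_neg_of_pos hx hz
  · simp [hy] at h2
  · have hx : 0 < x := by nlinarith
    have hz : z < 0 := by nlinarith
    exact mul_neg_of_pos_of_neg hx hz

lemma same_same {x y z : ℝ} (h1 : 0 < x * y) (h2 : 0 < y * z) : 0 < x * z := by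
  rcases lt_trichotomy y 0 with hy | hy | hy
  · have hx : x < 0 := by nlinarith
    have hz : z < 0 := by nlinarith
    exact mul_pos_of_neg_of_neg hx hz
  · simp [hy] at h1
  · have hx : 0 < x := by nlinarith
    have hz : 0 < z := by nlinarith
    positivity

lemma pos_of_ne_of_not_lt {x y : ℝ} (hx : x ≠ 0) (hy : y ≠ 0) (h : ¬ x * y < 0) : 0 < x * y :=
  ((mul_ne_zero hx hy).lt_or_gt.resolve_left (by simpa using h))

/-! ### Basic signVar lemmas -/

noncomputable def nz (l : List ℝ) : List ℝ := l.filter (fun x => decide (x ≠ 0))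

lemma signVar_def (l : List ℝ) :
    signVar l = ((nz l).zip (nz l).tail).countP (fun p => decide (p.1 * p.2 < 0)) := rfl

lemma nz_cons_ne {x : ℝ} (hx : x ≠ 0) (l : List ℝ) : nz (x :: l) = x :: nz l := by
  simp [nz, hx]

lemma nz_eq_self {l : List ℝ} (h : ∀ x ∈ l, x ≠ 0) : nz l = l := by
  rw [nz, List.filter_eq_self]
  intro a ha; simpa using h a ha

lemma mem_nz_ne {l : List ℝ} {x : ℝ} (hx : x ∈ nz l) : x ≠ 0 := by
  rw [nz, List.mem_filter] at hx; exact of_decide_eq_true hx.2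

lemma signVar_nz (l : List ℝ) : signVar (nz l) = signVar l := by
  rw [signVar_def, signVar_def l]
  congr 2 <;> (rw [nz_eq_self]; intro x hx; exact mem_nz_ne hx)

lemma signVar_nil : signVar ([] : List ℝ) = 0 := rfl

lemma signVar_singleton (x : ℝ) : signVar [x] = 0 := by
  by_cases hx : x = 0 <;> simp [signVar, hx]

lemma signVar_cons {x : ℝ} (hx : x ≠ 0) {l : List ℝ} (hl : ∀ y ∈ l, y ≠ 0) :
    signVar (x :: l) = signVar l + (if x * l.headI < 0 then 1 else 0) := by
  cases l with
  | nil => simp [signVar_singleton, signVar_nil, show (default : ℝ) = 0 from rfl]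
  | cons y t =>
      have hy : y ≠ 0 := hl y (by simp)
      have ht : ∀ z ∈ t, z ≠ 0 := fun z hz => hl z (by simp [hz])
      rw [signVar_def, nz_cons_ne hx, nz_cons_ne hy, nz_eq_self ht]
      rw [signVar_def, nz_cons_ne hy, nz_eq_self ht]
      simp only [List.tail_cons, List.zip_cons_cons, List.countP_cons, List.headI]
      simp [Nat.add_comm]
      rfl

/-! ### Sublists do not increase sign variations -/

lemma signVar_sublist_aux : ∀ {t l : List ℝ}, t.Sublist l → (∀ x ∈ l, x ≠ 0) →
    signVar t + (if t.headI * l.headI < 0 then 1 else 0) ≤ signVar l := by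
  intro t l h
  induction h with
  | slnil =>
      intro _
      simp [signVar_nil, show (default : ℝ) = 0 from rfl]
  | @cons t l a h ih =>
      intro hal
      have ha : a ≠ 0 := hal a (by simp)
      have hl : ∀ x ∈ l, x ≠ 0 := fun x hx => hal x (by simp [hx])
      have ihh := ih hl
      rw [signVar_cons ha hl]
      cases t with
      | nil =>
          simp only [List.headI, show (default : ℝ) = 0 from rfl, zero_mul]
          simp [signVar_nil]
      | cons x t' =>
          have hx : x ≠ 0 := hl x (h.subset (List.mem_cons_self))
          cases l with
          | nil => exact absurd (List.sublist_nil.mp h) (by simp)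
          | cons y l' =>
              have hy : y ≠ 0 := hl y (by simp)
              simp -implicitDefEqProofs only [List.headI_cons] at ihh ⊢
              by_cases hxa : x * a < 0
              · rw [if_pos hxa]
                by_cases hxy : x * y < 0
                · rw [if_pos hxy] at ihh; omega
                · have hxy' : 0 < x * y := pos_of_ne_of_not_lt hx hy hxy
                  have hay : a * y < 0 :=
                    opp_same (by linarith [mul_comm x a] : a * x < 0) hxy'
                  rw [if_pos hay]
                  rw [if_neg hxy] at ihh; omega
              · rw [if_neg hxa]
                split_ifs at ihh ⊢ <;> omega
  | @cons_cons t l a h ih =>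
      intro hal
      have ha : a ≠ 0 := hal a (by simp)
      have hl : ∀ x ∈ l, x ≠ 0 := fun x hx => hal x (by simp [hx])
      have ht : ∀ x ∈ t, x ≠ 0 := fun x hx => hl x (h.subset hx)
      have ihh := ih hl
      have haa : ¬ (a * a < 0) := by nlinarith [mul_self_nonneg a]
      rw [if_neg (by simpa only [List.headI] using haa)]
      rw [signVar_cons ha ht, signVar_cons ha hl]
      cases t with
      | nil =>
          simp only [signVar_nil, List.headI, show (default : ℝ) = 0 from rfl, mul_zero]
          simp
      | cons x t' =>
          have hx : x ≠ 0 := ht x (by simp)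
          cases l with
          | nil => exact absurd (List.sublist_nil.mp h) (by simp)
          | cons y l' =>
              have hy : y ≠ 0 := hl y (by simp)
              simp -implicitDefEqProofs only [List.headI_cons] at ihh ⊢
              by_cases hax : a * x < 0
              · by_cases hay : a * y < 0
                · have hxy : 0 < x * y :=
                    opp_opp (by linarith [mul_comm a x] : x * a < 0) hay
                  rw [if_pos hax, if_pos hay]
                  rw [if_neg (not_lt.mpr hxy.le)] at ihh
                  omega
                · have hay' : 0 < a * y := pos_of_ne_of_not_lt ha hy hay
                  have hxy : x * y < 0 :=
                    opp_same (by linarith [mul_comm a x] : x * a < 0) hay'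
                  rw [if_pos hax, if_neg hay]
                  rw [if_pos hxy] at ihh
                  omega
              · rw [if_neg hax]
                split_ifs at ihh ⊢ <;> omega

lemma signVar_le_of_sublist {t l : List ℝ} (h : t.Sublist l) : signVar t ≤ signVar l := by
  have h2 : (nz t).Sublist (nz l) := h.filter _
  have := signVar_sublist_aux h2 (fun x hx => mem_nz_ne hx)
  rw [signVar_nz, signVar_nz] at this
  omega

/-! ### Parity of signVar -/

lemma getLastD_mem : ∀ (s : List ℝ), s ≠ [] → s.getLastD 0 ∈ s := by
  intro s
  induction s with
  | nil => intro h; simp at h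
  | cons x t ih =>
    intro _
    cases t with
    | nil => simp
    | cons y u =>
      have := ih (by simp)
      rw [show ((x :: y :: u).getLastD 0) = ((y :: u).getLastD 0) from by
        simp [List.getLastD_cons]]
      exact List.mem_cons_of_mem _ this

lemma even_signVar_iff : ∀ (s : List ℝ), (∀ x ∈ s, x ≠ 0) → s ≠ [] →
    (Even (signVar s) ↔ 0 < s.headI * s.getLastD 0) := by
  intro s
  induction s with
  | nil => intro _ h; simp at h
  | cons x t ih =>
    intro hs _
    have hx : x ≠ 0 := hs x (by simp)
    have ht : ∀ y ∈ t, y ≠ 0 := fun y hy => hs y (by simp [hy])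
    cases t with
    | nil => simp [signVar_singleton, mul_self_pos, hx]
    | cons y u =>
      have hy : y ≠ 0 := ht y (by simp)
      have hL : (y :: u).getLastD 0 ≠ 0 := ht _ (getLastD_mem _ (by simp))
      have ihh := ih ht (by simp)
      rw [signVar_cons hx ht]
      rw [show ((x :: y :: u).getLastD 0) = ((y :: u).getLastD 0) from by
        simp [List.getLastD_cons]]
      simp -implicitDefEqProofs only [List.headI_cons] at ihh ⊢
      set L := (y :: u).getLastD 0 with hLdef
      by_cases hxy : x * y < 0
      · rw [if_pos hxy, Nat.even_add_one, ihh]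
        constructor
        · intro hbad
          have hyL : y * L < 0 := (mul_ne_zero hy hL).lt_or_gt.resolve_right hbad
          exact opp_opp hxy hyL
        · intro hpos hbad
          exact absurd (opp_same hxy hbad) (not_lt.mpr hpos.le)
      · have hxy' : 0 < x * y := pos_of_ne_of_not_lt hx hy hxy
        rw [if_neg hxy, Nat.add_zero, ihh]
        constructor
        · intro hyL; exact same_same hxy' hyL
        · intro hxL
          exact same_same (by linarith [mul_comm x y] : 0 < y * x) hxL

/-! ### An alternating sublist achieving the number of sign variations -/

lemma exists_alt_sublist : ∀ (s : List ℝ), (∀ x ∈ s, x ≠ 0) → s ≠ [] →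
    ∃ t : List ℝ, t.Sublist s ∧ t ≠ [] ∧ t.Chain' (fun a b => a * b < 0) ∧
      t.length = signVar s + 1 ∧ t.headI = s.headI := by
  intro s
  induction s with
  | nil => intro _ h; simp at h
  | cons x t ih =>
    intro hs _
    have hx : x ≠ 0 := hs x (by simp)
    have ht : ∀ y ∈ t, y ≠ 0 := fun y hy => hs y (by simp [hy])
    cases t with
    | nil => exact ⟨[x], by simp, by simp, List.isChain_singleton _, by simp [signVar_singleton], rfl⟩
    | cons y u =>
      have hy : y ≠ 0 := ht y (by simp)
      obtain ⟨t', hsub, hne, hch, hlen, hhead⟩ := ih ht (by simp)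
      obtain ⟨a, v, rfl⟩ : ∃ a v, t' = a :: v := by
        cases t' with
        | nil => simp at hne
        | cons a v => exact ⟨a, v, rfl⟩
      have ha : y = a := by simpa using hhead.symm
      subst ha
      rw [signVar_cons hx ht]
      simp -implicitDefEqProofs only [List.headI_cons]
      by_cases hxy : x * y < 0
      · refine ⟨x :: y :: v, hsub.cons₂ x, by simp, List.isChain_cons_cons.mpr ⟨hxy, hch⟩, ?_, rfl⟩
        rw [if_pos hxy]
        simp only [List.length_cons] at hlen ⊢
        omega
      · refine ⟨x :: v, ((List.sublist_cons_self y v).trans hsub).cons₂ x, by simp, ?_, ?_, rfl⟩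
        · cases v with
          | nil => exact List.isChain_singleton _
          | cons z w =>
            have hyz : y * z < 0 := (List.isChain_cons_cons.mp hch).1
            have hxz : x * z < 0 := same_opp (pos_of_ne_of_not_lt hx hy hxy) hyz
            exact List.isChain_cons_cons.mpr ⟨hxz, (List.isChain_cons_cons.mp hch).2⟩
        · rw [if_neg hxy]
          simp only [List.length_cons] at hlen ⊢
          omega

lemma signVar_alt : ∀ (s : List ℝ), (∀ x ∈ s, x ≠ 0) → s.Chain' (fun a b => a * b < 0) →
    signVar s = s.length - 1 := by
  intro s
  induction s with
  | nil => intro _ _; simp [signVar_nil]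
  | cons x t ih =>
    intro hs hch
    have hx : x ≠ 0 := hs x (by simp)
    have ht : ∀ y ∈ t, y ≠ 0 := fun y hy => hs y (by simp [hy])
    rw [signVar_cons hx ht]
    cases t with
    | nil => simp [signVar_nil, show (default : ℝ) = 0 from rfl]
    | cons y u =>
      have hxy : x * y < 0 := (List.isChain_cons_cons.mp hch).1
      rw [ih ht (List.isChain_cons_cons.mp hch).2, if_pos (by simpa only [List.headI] using hxy)]
      simp only [List.length_cons]
      omega

/-! ### Sorted lists of naturals are sublists of range -/

lemma sublist_range_of_pairwise : ∀ (n : ℕ) (l : List ℕ), l.Pairwise (· < ·) →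
    (∀ x ∈ l, x < n) → l.Sublist (List.range n) := by
  intro n
  induction n with
  | zero =>
    intro l _ hb
    cases l with
    | nil => simp
    | cons a t => exact absurd (hb a (by simp)) (by omega)
  | succ n ih =>
    intro l hp hb
    rcases List.eq_nil_or_concat l with rfl | ⟨l', a, rfl⟩
    · simp
    · simp only [List.concat_eq_append] at hp hb ⊢
      rw [List.range_succ]
      have hpa : ∀ x ∈ l', x < a :=
        fun x hx => (List.pairwise_append.mp hp).2.2 x hx a (by simp)
      by_cases haa : a = n
      · subst haa
        exact (ih l' (List.pairwise_append.mp hp).1 hpa).append (List.Sublist.refl [a])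
      · have haN : a < n := by have := hb a (by simp); omega
        have h2 : (l' ++ [a]).Sublist (List.range n) := ih _ hp (by
          intro x hx
          rcases List.mem_append.mp hx with h | h
          · exact lt_trans (hpa x h) haN
          · simp at h; omega)
        exact h2.trans (List.sublist_append_left _ _)

/-! ### Telescoping sums for the coefficients of `(X - C lam) * h` -/

lemma tele {h l : Polynomial ℝ} {lam : ℝ} (hl : l = (Polynomial.X - Polynomial.C lam) * h)
    (p q : ℕ) (hpq : p ≤ q) :
    ∑ k ∈ Finset.Ico p q, lam ^ k * l.coeff (k + 1)
      = lam ^ p * h.coeff p - lam ^ q * h.coeff q := by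
  have hc : ∀ k, lam ^ k * l.coeff (k + 1)
      = (fun i => lam ^ i * h.coeff i) k - (fun i => lam ^ i * h.coeff i) (k + 1) := by
    intro k
    rw [hl, mul_comm (Polynomial.X - Polynomial.C lam) h, Polynomial.coeff_mul_X_sub_C]
    simp only
    ring
  rw [Finset.sum_congr rfl fun k _ => hc k, Finset.sum_Ico_eq_sub _ hpq,
    Finset.sum_range_sub' (fun i => lam ^ i * h.coeff i),
    Finset.sum_range_sub' (fun i => lam ^ i * h.coeff i)]
  ring

lemma exists_sign_interval {l : Polynomial ℝ} {lam : ℝ} (hlam : 0 < lam) {p q : ℕ} {w : ℝ}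
    (hS : 0 < (∑ k ∈ Finset.Ico p q, lam ^ k * l.coeff (k + 1)) * w) :
    ∃ j, p < j ∧ j ≤ q ∧ 0 < l.coeff j * w := by
  by_contra hcon
  push_neg at hcon
  have heq : (∑ k ∈ Finset.Ico p q, lam ^ k * l.coeff (k + 1)) * w
      = ∑ k ∈ Finset.Ico p q, lam ^ k * (l.coeff (k + 1) * w) := by
    rw [Finset.sum_mul]; exact Finset.sum_congr rfl fun k _ => by ring
  rw [heq] at hS
  have hle : ∀ k ∈ Finset.Ico p q, lam ^ k * (l.coeff (k + 1) * w) ≤ 0 := by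
    intro k hk
    have hk' := Finset.mem_Ico.mp hk
    exact mul_nonpos_of_nonneg_of_nonpos (le_of_lt (pow_pos hlam k))
      (hcon (k + 1) (by omega) (by omega))
  exact absurd (Finset.sum_nonpos hle) (not_le.mpr hS)

/-! ### Constructing the alternating positions for `l` -/

lemma buildQs {h l : Polynomial ℝ} {lam : ℝ} (hlam : 0 < lam) {m : ℕ}
    (hdeg : h.natDegree = m) (hl : l = (Polynomial.X - Polynomial.C lam) * h) :
    ∀ ps : List ℕ, ps ≠ [] → ps.Chain' (· < ·) → (∀ i ∈ ps, i ≤ m) →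
      (ps.map h.coeff).Chain' (fun a b => a * b < 0) → (∀ i ∈ ps, h.coeff i ≠ 0) →
      ∃ qs : List ℕ, qs ≠ [] ∧ qs.Chain' (· < ·) ∧ (∀ j ∈ qs, j ≤ m + 1) ∧
        qs.length = ps.length ∧ (qs.map l.coeff).Chain' (fun a b => a * b < 0) ∧
        (∀ j ∈ qs, l.coeff j ≠ 0) ∧ ps.headI < qs.headI ∧
        0 < l.coeff qs.headI * h.coeff ps.headI := by
  intro ps
  induction ps with
  | nil => intro hne; simp at hne
  | cons p ps' ih =>
    intro _ hch hbd halt hnz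
    have hpm : p ≤ m := hbd p (by simp)
    have hbp : h.coeff p ≠ 0 := hnz p (by simp)
    cases ps' with
    | nil =>
      have hS := tele hl p (m + 1) (by omega)
      have hz : h.coeff (m + 1) = 0 := Polynomial.coeff_eq_zero_of_natDegree_lt (by omega)
      rw [hz] at hS
      have hSpos : 0 < (∑ k ∈ Finset.Ico p (m + 1), lam ^ k * l.coeff (k + 1)) * h.coeff p := by
        rw [hS]
        have h1 : 0 < lam ^ p := pow_pos hlam p
        nlinarith [mul_self_pos.mpr hbp]
      obtain ⟨j, hj1, hj2, hj3⟩ := exists_sign_interval hlam hSpos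
      refine ⟨[j], by simp, List.isChain_singleton _, by simpa using hj2, by simp, List.isChain_singleton (l.coeff j), ?_,
        by simpa using hj1, by simpa using hj3⟩
      intro j' hj'
      simp only [List.mem_singleton] at hj'
      subst hj'
      intro hzero
      rw [hzero] at hj3
      simp at hj3
    | cons p' ps'' =>
      have hpp' : p < p' := (List.isChain_cons_cons.mp hch).1
      have hp'm : p' ≤ m := hbd p' (by simp)
      have hbp' : h.coeff p' ≠ 0 := hnz p' (by simp)
      have haltc := (List.isChain_cons_cons.mp (show (h.coeff p :: (p' :: ps'').map h.coeff).Chain'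
        (fun a b => a * b < 0) from by simpa using halt))
      have halt1 : h.coeff p * h.coeff p' < 0 := by simpa using haltc.1
      obtain ⟨qs', hne', hch', hbd', hlen', haltc', hnz', hhead', hsign'⟩ :=
        ih (by simp) (List.isChain_cons_cons.mp hch).2 (fun i hi => hbd i (by simp [hi]))
          haltc.2 (fun i hi => hnz i (by simp [hi]))
      have hS := tele hl p p' (le_of_lt hpp')
      have hSpos : 0 < (∑ k ∈ Finset.Ico p p', lam ^ k * l.coeff (k + 1)) * h.coeff p := by
        rw [hS]
        have h1 : 0 < lam ^ p := pow_pos hlam p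
        have h2 : 0 < lam ^ p' := pow_pos hlam p'
        nlinarith [mul_self_pos.mpr hbp]
      obtain ⟨j, hj1, hj2, hj3⟩ := exists_sign_interval hlam hSpos
      obtain ⟨a, u, rfl⟩ : ∃ a u, qs' = a :: u := by
        cases qs' with
        | nil => simp at hne'
        | cons a u => exact ⟨a, u, rfl⟩
      have hp'a : p' < a := by simpa using hhead'
      have hca : 0 < l.coeff a * h.coeff p' := by simpa using hsign'
      have hja : l.coeff j * l.coeff a < 0 := by
        have s1 : l.coeff j * h.coeff p' < 0 := same_opp hj3 halt1
        exact opp_same s1 (by linarith [mul_comm (l.coeff a) (h.coeff p')])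
      refine ⟨j :: a :: u, by simp, ?_, ?_, ?_, ?_, ?_, by simpa using hj1, by simpa using hj3⟩
      · exact List.isChain_cons_cons.mpr ⟨by omega, hch'⟩
      · intro j' hj'
        rcases List.mem_cons.mp hj' with rfl | hj'
        · omega
        · exact hbd' j' hj'
      · simp [hlen']
      · exact List.isChain_cons_cons.mpr ⟨hja, haltc'⟩
      · intro j' hj'
        rcases List.mem_cons.mp hj' with rfl | hj'
        · intro hzero; rw [hzero] at hj3; simp at hj3
        · exact hnz' j' hj'

lemma nz_range_succ_map (f : ℕ → ℝ) (n : ℕ) (hf : f 0 ≠ 0) :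
    ∃ r, nz ((List.range (n + 1)).map f) = f 0 :: r := by
  rw [List.range_succ_eq_map, List.map_cons, nz_cons_ne hf]
  exact ⟨_, rfl⟩

lemma getLastD_nz_range (f : ℕ → ℝ) (n : ℕ) (hf : f n ≠ 0) :
    (nz ((List.range (n + 1)).map f)).getLastD 0 = f n := by
  rw [List.range_succ, List.map_append, List.map_singleton]
  rw [show nz ((List.range n).map f ++ [f n])
      = nz ((List.range n).map f) ++ [f n] from by simp [nz, List.filter_append, hf]]
  exact List.getLastD_concat

end GD

open GD in
theorem gauss_lemma_for_descartes (m : ℕ) (h : Polynomial ℝ) (hne : h ≠ 0)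
    (hdeg : h.natDegree = m) (h0 : h.eval 0 ≠ 0) (lam : ℝ) (hlam : 0 < lam)
    (l : Polynomial ℝ) (hl : l = (Polynomial.X - Polynomial.C lam) * h) :
    ∃ ν : ℕ, Even ν ∧
      signVar ((List.range (m + 2)).map l.coeff)
        = signVar ((List.range (m + 1)).map h.coeff) + 1 + ν := by
  -- basic coefficient facts
  have hb0 : h.coeff 0 ≠ 0 := by rwa [Polynomial.coeff_zero_eq_eval_zero]
  have hbm : h.coeff m ≠ 0 := by
    rw [← hdeg]; exact Polynomial.leadingCoeff_ne_zero.mpr hne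
  have hXC : (Polynomial.X - Polynomial.C lam) ≠ 0 := Polynomial.X_sub_C_ne_zero lam
  have hldeg : l.natDegree = m + 1 := by
    rw [hl, Polynomial.natDegree_mul hXC hne, Polynomial.natDegree_X_sub_C, hdeg]
    omega
  have hc0 : l.coeff 0 = -(lam * h.coeff 0) := by
    rw [Polynomial.coeff_zero_eq_eval_zero, Polynomial.coeff_zero_eq_eval_zero, hl]
    simp only [Polynomial.eval_mul, Polynomial.eval_sub, Polynomial.eval_X, Polynomial.eval_C]
    ring
  have hc0ne : l.coeff 0 ≠ 0 := by
    rw [hc0]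
    simp [hlam.ne', hb0]
  have hcm1 : l.coeff (m + 1) = h.coeff m := by
    have h1 : l.coeff (m + 1) = l.leadingCoeff := by rw [Polynomial.leadingCoeff, hldeg]
    rw [h1, hl, Polynomial.leadingCoeff_mul, Polynomial.leadingCoeff_X_sub_C, one_mul,
      Polynomial.leadingCoeff, hdeg]
  have hcm1ne : l.coeff (m + 1) ≠ 0 := hcm1 ▸ hbm
  set bl := (List.range (m + 1)).map h.coeff with hbl
  set cl := (List.range (m + 2)).map l.coeff with hcl
  set Vb := signVar bl with hVb
  set Vc := signVar cl with hVc
  -- parity of Vb and Vc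
  obtain ⟨rb, hrb⟩ := nz_range_succ_map h.coeff m hb0
  obtain ⟨rc, hrc⟩ := nz_range_succ_map l.coeff (m + 1) hc0ne
  have hparb : Even Vb ↔ 0 < h.coeff 0 * h.coeff m := by
    rw [hVb, ← signVar_nz bl,
      even_signVar_iff _ (fun x hx => mem_nz_ne hx) (by rw [hbl, hrb]; simp),
      show (nz bl).headI = h.coeff 0 from by rw [hbl, hrb]; rfl,
      show (nz bl).getLastD 0 = h.coeff m from getLastD_nz_range h.coeff m hbm]
  have hparc : Even Vc ↔ 0 < l.coeff 0 * l.coeff (m + 1) := by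
    rw [hVc, ← signVar_nz cl,
      even_signVar_iff _ (fun x hx => mem_nz_ne hx) (by rw [hcl, hrc]; simp),
      show (nz cl).headI = l.coeff 0 from by rw [hcl, hrc]; rfl,
      show (nz cl).getLastD 0 = l.coeff (m + 1) from getLastD_nz_range l.coeff (m + 1) hcm1ne]
  -- parity relation
  have hbprod : h.coeff 0 * h.coeff m ≠ 0 := mul_ne_zero hb0 hbm
  have hparity : Even Vc ↔ ¬ Even Vb := by
    rw [hparb, hparc, hc0, hcm1]
    constructor
    · intro hpos hpos'
      nlinarith [mul_pos hlam hpos']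
    · intro hneg
      have hlt : h.coeff 0 * h.coeff m < 0 := hbprod.lt_or_gt.resolve_right hneg
      nlinarith [mul_pos hlam (neg_pos.mpr hlt)]
  -- the alternating sublist of b
  have hnzbl : nz bl = List.map h.coeff
      ((List.range (m + 1)).filter ((fun x => decide (x ≠ 0)) ∘ h.coeff)) := by
    rw [hbl, nz, List.filter_map]
  obtain ⟨t, htsub, htne, htch, htlen, hthead⟩ :=
    exists_alt_sublist (nz bl) (fun x hx => mem_nz_ne hx) (by rw [hrb]; simp)
  rw [hnzbl] at htsub
  obtain ⟨ps, hpssub, rfl⟩ := List.sublist_map_iff.mp htsub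
  have hpsrange : ps.Sublist (List.range (m + 1)) :=
    hpssub.trans List.filter_sublist
  have hpsne : ps ≠ [] := by rintro rfl; simp at htne
  have hpschain : ps.Chain' (· < ·) :=
    List.isChain_iff_pairwise.mpr (List.Pairwise.sublist hpsrange List.pairwise_lt_range)
  have hpsbd : ∀ i ∈ ps, i ≤ m := by
    intro i hi
    have := List.mem_range.mp (hpsrange.subset hi)
    omega
  have hpsnz : ∀ i ∈ ps, h.coeff i ≠ 0 := by
    intro i hi
    have := (List.mem_filter.mp (hpssub.subset hi)).2
    simpa using of_decide_eq_true this
  obtain ⟨p0, ps', rfl⟩ : ∃ p0 ps', ps = p0 :: ps' := by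
    cases ps with
    | nil => simp at hpsne
    | cons p0 ps' => exact ⟨p0, ps', rfl⟩
  have hheadb : h.coeff p0 = h.coeff 0 := by
    have : ((p0 :: ps').map h.coeff).headI = (nz bl).headI := hnzbl ▸ hthead
    rw [hrb] at this
    simpa using this
  -- build the alternating positions for l
  obtain ⟨qs, hqne, hqch, hqbd, hqlen, hqalt, hqnz, hqhead, hqsign⟩ :=
    buildQs hlam hdeg hl (p0 :: ps') hpsne hpschain hpsbd htch hpsnz
  obtain ⟨a, u, rfl⟩ : ∃ a u, qs = a :: u := by
    cases qs with
    | nil => simp at hqne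
    | cons a u => exact ⟨a, u, rfl⟩
  have hahead : p0 < a := by simpa using hqhead
  have hca : 0 < l.coeff a * h.coeff 0 := by
    have := hqsign
    simp only [List.headI] at this
    rwa [hheadb] at this
  have hc0a : l.coeff 0 * l.coeff a < 0 := by
    have h1 : 0 < h.coeff 0 * l.coeff a := by linarith [mul_comm (l.coeff a) (h.coeff 0)]
    have h2 : l.coeff 0 * l.coeff a = -(lam * (h.coeff 0 * l.coeff a)) := by
      rw [hc0]; ring
    rw [h2]
    have := mul_pos hlam h1
    linarith
  -- the full alternating index list for l
  set Q : List ℕ := 0 :: a :: u with hQ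
  have hQch : Q.Chain' (· < ·) := List.isChain_cons_cons.mpr ⟨by omega, hqch⟩
  have hQsub : Q.Sublist (List.range (m + 2)) := by
    apply sublist_range_of_pairwise
    · exact List.isChain_iff_pairwise.mp hQch
    · intro x hx
      rcases List.mem_cons.mp hx with rfl | hx
      · omega
      · have := hqbd x hx; omega
  have hQalt : (Q.map l.coeff).Chain' (fun x y => x * y < 0) := by
    rw [hQ, List.map_cons]
    exact List.isChain_cons_cons.mpr ⟨by simpa using hc0a, hqalt⟩
  have hQnz : ∀ x ∈ Q.map l.coeff, x ≠ 0 := by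
    intro x hx
    rcases List.mem_map.mp hx with ⟨j, hj, rfl⟩
    rcases List.mem_cons.mp hj with rfl | hj
    · exact hc0ne
    · exact hqnz j hj
  have hQlen : (Q.map l.coeff).length = Vb + 2 := by
    have ht1 : ((p0 :: ps').map h.coeff).length = Vb + 1 := by
      rw [htlen, signVar_nz, hVb]
    simp only [List.length_map, List.length_cons] at ht1
    have h2 := hqlen
    simp only [List.length_cons] at h2
    simp only [hQ, List.length_map, List.length_cons]
    omega
  have hQsv : signVar (Q.map l.coeff) = Vb + 1 := by
    rw [signVar_alt _ hQnz hQalt, hQlen]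
    omega
  have hlow : Vb + 1 ≤ Vc := by
    rw [← hQsv, hVc]
    exact signVar_le_of_sublist (hcl ▸ List.Sublist.map l.coeff hQsub)
  -- conclusion
  refine ⟨Vc - (Vb + 1), ?_, by omega⟩
  rw [Nat.even_sub hlow, Nat.even_add_one]
  tauto
end

section
/- Let h(x) be a nonzero polynomial with real coefficients with h(0) ≠ 0, let (λ_i)_{i=1}^k be a (not necessarily distinct) finite sequence of positive real numbers, and let f(x) = h(x) · Π_{i=1}^k (x - λ_i). Then there exists a nonnegative even integer ν such that V_f(0) = k + V_h(0) + ν, where V_f(0) and V_h(0) denote the numbers of sign variations in the coefficient sequences of f and h, respectively. -/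
namespace SV

lemma sign_transfer {x y z : ℝ} (hxy : 0 < x * y) (hxz : x * z < 0) : y * z < 0 := by
  rcases mul_pos_iff.mp hxy with ⟨hx, hy⟩ | ⟨hx, hy⟩ <;>
    rcases mul_neg_iff.mp hxz with ⟨h1, h2⟩ | ⟨h1, h2⟩ <;>
    first
      | exact mul_neg_of_pos_of_neg hy h2
      | exact mul_neg_of_neg_of_pos hy h2
      | linarith

lemma pos_pos {x y z : ℝ} (h1 : 0 < x * z) (h2 : 0 < y * z) : 0 < x * y := by
  rcases mul_pos_iff.mp h1 with ⟨hx, hz⟩ | ⟨hx, hz⟩ <;>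
    rcases mul_pos_iff.mp h2 with ⟨hy, hz'⟩ | ⟨hy, hz'⟩ <;>
    first
      | exact mul_pos hx hy
      | exact mul_pos_of_neg_of_neg hx hy
      | linarith

lemma sublist_tail {x y : ℝ} {s t : List ℝ} (h : (x :: s).Sublist (y :: t)) : s.Sublist t := by
  cases h with
  | cons _ h => exact (List.sublist_cons_self x s).trans h
  | cons_cons => assumption



open Classical in
noncomputable def var (l : List ℝ) : ℕ := (l.zip l.tail).countP (fun p => decide (p.1 * p.2 < 0))

open Classical in
lemma signVar_eq (l : List ℝ) : signVar l = var (l.filter (fun x => decide (x ≠ 0))) := rfl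

def lst : List ℝ → ℝ
  | [] => 0
  | [a] => a
  | _ :: b :: t => lst (b :: t)

@[simp] lemma lst_singleton (a : ℝ) : lst [a] = a := rfl
@[simp] lemma lst_cons_cons (a b : ℝ) (t : List ℝ) : lst (a :: b :: t) = lst (b :: t) := rfl

lemma lst_mem : ∀ (l : List ℝ), l ≠ [] → lst l ∈ l
  | [a], _ => by simp
  | a :: b :: t, _ => List.mem_cons_of_mem a (lst_mem (b :: t) (by simp))

@[simp] lemma var_nil : var ([] : List ℝ) = 0 := rfl
@[simp] lemma var_singleton (a : ℝ) : var [a] = 0 := rfl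

lemma var_cons_cons (a b : ℝ) (l : List ℝ) :
    var (a :: b :: l) = (if a * b < 0 then 1 else 0) + var (b :: l) := by
  simp only [var, List.zip_cons_cons, List.tail_cons, List.countP_cons]
  split <;> simp_all <;> omega

lemma var_cons_le (a : ℝ) (l : List ℝ) : var l ≤ var (a :: l) := by
  cases l with
  | nil => simp
  | cons b t => rw [var_cons_cons]; omega

lemma ite_sign (a b c : ℝ) (hb : b ≠ 0) :
    (if a * c < 0 then (1:ℕ) else 0) ≤
      (if a * b < 0 then 1 else 0) + (if b * c < 0 then 1 else 0) := by
  split_ifs <;> try omega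
  all_goals
    exfalso
    rename_i h1 h2 h3
    push_neg at h2 h3
    nlinarith [mul_nonneg h2 h3, mul_self_pos.mpr hb]

lemma var_cons_cons_le (a b : ℝ) (hb : b ≠ 0) (l : List ℝ) :
    var (a :: l) ≤ var (a :: b :: l) := by
  cases l with
  | nil => simp [var_cons_cons]
  | cons c t =>
    rw [var_cons_cons a c, var_cons_cons a b, var_cons_cons b c]
    have := ite_sign a b c hb
    omega

lemma var_sublist_aux : ∀ {l₁ l₂ : List ℝ}, l₁.Sublist l₂ → (∀ x ∈ l₂, x ≠ 0) →
    var l₁ ≤ var l₂ ∧ ∀ a : ℝ, var (a :: l₁) ≤ var (a :: l₂) := by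
  intro l₁ l₂ hsub
  induction hsub with
  | slnil => simp
  | @cons l₁ l₂ b hs ih =>
    intro hz
    have hz' : ∀ x ∈ l₂, x ≠ 0 := fun x hx => hz x (List.mem_cons_of_mem _ hx)
    have hb : b ≠ 0 := hz b List.mem_cons_self
    obtain ⟨h1, h2⟩ := ih hz'
    exact ⟨le_trans h1 (var_cons_le b _),
      fun a => le_trans (h2 a) (var_cons_cons_le a b hb _)⟩
  | @cons_cons l₁ l₂ b hs ih =>
    intro hz
    have hz' : ∀ x ∈ l₂, x ≠ 0 := fun x hx => hz x (List.mem_cons_of_mem _ hx)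
    obtain ⟨h1, h2⟩ := ih hz'
    refine ⟨h2 b, fun a => ?_⟩
    cases l₁ with
    | nil =>
      cases l₂ with
      | nil => simp
      | cons c t =>
        rw [var_cons_cons a b, var_cons_cons a b]
        exact Nat.add_le_add_left (h2 b) _
    | cons p q =>
      rw [var_cons_cons a b, var_cons_cons a b]
      exact Nat.add_le_add_left (h2 b) _

lemma var_sublist {l₁ l₂ : List ℝ} (hsub : l₁.Sublist l₂) (hz : ∀ x ∈ l₂, x ≠ 0) :
    var l₁ ≤ var l₂ := (var_sublist_aux hsub hz).1

lemma var_append (P : List ℝ) (hP : P ≠ []) (b : ℝ) (S : List ℝ) :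
    var (P ++ b :: S) = var P + (if lst P * b < 0 then 1 else 0) + var (b :: S) := by
  induction P with
  | nil => exact absurd rfl hP
  | cons p P ih =>
    cases P with
    | nil => by_cases hpb : p * b < 0 <;> simp [var_cons_cons, hpb]
    | cons q Q =>
      rw [List.cons_append, List.cons_append, var_cons_cons, ← List.cons_append,
        ih (by simp), var_cons_cons p q, lst_cons_cons]
      omega

lemma var_of_same_sign (s : ℝ) : ∀ (l : List ℝ), (∀ x ∈ l, 0 < x * s) → var l = 0 := by
  intro l
  induction l with
  | nil => simp
  | cons a t ih =>
    intro hl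
    cases t with
    | nil => simp
    | cons b t' =>
      rw [var_cons_cons, ih (fun x hx => hl x (List.mem_cons_of_mem _ hx))]
      have ha := hl a (by simp)
      have hb := hl b (by simp)
      have : ¬ a * b < 0 := by nlinarith [mul_pos ha hb, mul_self_nonneg s]
      simp [this]

lemma var_parity : ∀ (l : List ℝ) (a : ℝ), a ≠ 0 → (∀ x ∈ l, x ≠ 0) →
    (Even (var (a :: l)) ↔ 0 < a * lst (a :: l)) := by
  intro l
  induction l with
  | nil => intro a ha _; simpa using mul_self_pos.mpr ha
  | cons b t ih =>
    intro a ha hz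
    have hb : b ≠ 0 := hz b (by simp)
    have hz' : ∀ x ∈ t, x ≠ 0 := fun x hx => hz x (List.mem_cons_of_mem _ hx)
    have ihb := ih b hb hz'
    have hLmem : lst (b :: t) ∈ b :: t := lst_mem _ (by simp)
    have hL : lst (b :: t) ≠ 0 := hz _ hLmem
    rw [var_cons_cons, lst_cons_cons]
    rcases (mul_ne_zero ha hb).lt_or_gt with h | h
    · rw [if_pos h, Nat.add_comm, Nat.even_add_one, ihb]
      constructor
      · intro hn
        have h1 : b * lst (b :: t) < 0 := by
          rcases (mul_ne_zero hb hL).lt_or_gt with h2 | h2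
          · exact h2
          · exact absurd h2 hn
        nlinarith [mul_pos_of_neg_of_neg h h1, mul_self_pos.mpr hb]
      · intro h1 h2
        nlinarith [mul_pos h1 h2, mul_self_nonneg (lst (b :: t))]
    · rw [if_neg (by linarith), Nat.zero_add, ihb]
      constructor <;> intro h1 <;>
        nlinarith [mul_pos h h1, mul_self_pos.mpr hb, mul_self_pos.mpr ha]

lemma var_chain : ∀ (l : List ℝ), l.Chain' (fun x y => x * y < 0) → var l = l.length - 1 := by
  intro l
  induction l with
  | nil => simp
  | cons a t ih =>
    intro hc
    cases t with
    | nil => simp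
    | cons b t' =>
      rw [var_cons_cons]
      replace hc := List.isChain_cons_cons.mp hc
      rw [ih hc.2]
      simp only [if_pos hc.1, List.length_cons]
      omega


noncomputable def cf (lam : ℝ) (a : ℕ → ℝ) : ℕ → ℝ :=
  fun i => (if i = 0 then 0 else a (i - 1)) - lam * a i

lemma lst_append_singleton : ∀ (P : List ℝ) (x : ℝ), lst (P ++ [x]) = x
  | [], x => rfl
  | p :: P, x => by
    have h := lst_append_singleton P x
    rw [List.cons_append]
    cases hP : P ++ [x] with
    | nil => exact absurd hP (by simp)
    | cons b u => rw [hP] at h; rw [lst_cons_cons]; exact h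

lemma key (lam : ℝ) (hlam : 0 < lam) :
    ∀ d : ℕ, ∀ a : ℕ → ℝ, a 0 ≠ 0 → a d ≠ 0 → (∀ i, d < i → a i = 0) →
    ∃ t : List ℝ,
      ((0 - lam * a 0) :: t).Sublist ((List.range (d + 2)).map (cf lam a)) ∧
      (∀ x ∈ (0 - lam * a 0) :: t, x ≠ 0) ∧
      ((0 - lam * a 0) :: t).Chain' (fun x y => x * y < 0) ∧
      ((0 - lam * a 0) :: t).length
        = var (((List.range (d + 1)).map a).filter (fun x => decide (x ≠ 0))) + 2 := by
  intro d
  induction d using Nat.strong_induction_on with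
  | _ d ih =>
  intro a ha0 atopd atop
  have hc0 : (0 : ℝ) - lam * a 0 ≠ 0 := by
    have := mul_ne_zero (ne_of_gt hlam) ha0
    intro h; apply this; linarith
  have e0 : cf lam a 0 = 0 - lam * a 0 := by simp [cf]
  by_cases hq : ∃ i, i < d + 1 ∧ a i * a 0 < 0
  · -- inductive step: there is a sign change
    classical
    set q := Nat.find hq with hqdef
    have hspec : q < d + 1 ∧ a q * a 0 < 0 := Nat.find_spec hq
    have hmin : ∀ i, i < q → ¬(i < d + 1 ∧ a i * a 0 < 0) := fun i hi => Nat.find_min hq hi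
    have hq1 : 1 ≤ q := by
      rcases Nat.eq_zero_or_pos q with h | h
      · exfalso
        have h2 := hspec.2
        rw [h] at h2
        nlinarith [mul_self_nonneg (a 0)]
      · exact h
    have hqd : q ≤ d := by
      by_contra hcon
      have : q = d + 1 ∨ d + 1 < q := by omega
      have hd1 : a q = 0 := atop q (by omega)
      have h2 := hspec.2
      rw [hd1, zero_mul] at h2
      exact lt_irrefl 0 h2
    have haq : a q ≠ 0 := by
      intro h
      have h2 := hspec.2
      rw [h, zero_mul] at h2
      exact lt_irrefl 0 h2
    have hiq : ∀ i, i < q → 0 ≤ a i * a 0 := by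
      intro i hi
      by_contra hlt
      exact hmin i hi ⟨by omega, not_le.mp hlt⟩
    set d' := d - q with hd'def
    set a' : ℕ → ℝ := fun i => a (q + i) with ha'def
    have ha'0 : a' 0 ≠ 0 := haq
    have ha'd : a' d' ≠ 0 := by
      show a (q + d') ≠ 0
      rw [show q + d' = d from by omega]
      exact atopd
    have hatop' : ∀ i, d' < i → a' i = 0 := fun i hi => atop _ (by omega)
    obtain ⟨t, hsub', hnz', hch', hlen'⟩ := ih d' (by omega) a' ha'0 ha'd hatop'
    have e_q : cf lam a q = a (q - 1) - lam * a q := by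
      simp only [cf]
      rw [if_neg (by omega)]
    have hcq0 : 0 < cf lam a q * a 0 := by
      rw [e_q]
      nlinarith [hiq (q - 1) (by omega), mul_pos hlam (neg_pos.mpr hspec.2)]
    have hcq : cf lam a q ≠ 0 := by
      intro h
      rw [h, zero_mul] at hcq0
      exact lt_irrefl 0 hcq0
    have hc'0a0 : 0 < (0 - lam * a' 0) * a 0 := by
      show 0 < (0 - lam * a (q + 0)) * a 0
      rw [show q + 0 = q from rfl]
      nlinarith [mul_pos hlam (neg_pos.mpr hspec.2)]
    have hc0a0 : (0 - lam * a 0) * a 0 < 0 := by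
      nlinarith [mul_self_pos.mpr ha0, hlam]
    refine ⟨cf lam a q :: t, ?_, ?_, ?_, ?_⟩
    · -- sublist
      have hrangesplit : List.range (d + 2) = 0 :: (List.range' 1 (q - 1) ++ List.range' q (d' + 2)) := by
        rw [List.range_eq_range', List.range'_succ]
        congr 1
        have h1 : 1 + 1 * (q - 1) = q := by omega
        have h2 : (d' + 2) + (q - 1) = d + 1 := by omega
        rw [← h2, Nat.add_comm (d' + 2), ← List.range'_append (s := 1) (m := q - 1) (n := d' + 2) (step := 1), h1]
      have hr'q : List.range' q (d' + 2) = q :: List.range' (q + 1) (d' + 1) := by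
        rw [List.range'_succ]
      have hMeq : List.map (cf lam a') (List.range (d' + 2)) =
          (0 - lam * a' 0) :: List.map (cf lam a) (List.range' (q + 1) (d' + 1)) := by
        have htail : List.map (cf lam a') (List.range' 1 (d' + 1))
            = List.map (cf lam a) (List.range' (q + 1) (d' + 1)) := by
          rw [List.range'_eq_map_range, List.range'_eq_map_range, List.map_map, List.map_map]
          apply List.map_congr_left
          intro x hx
          simp only [Function.comp, cf, ha'def]
          rw [if_neg (by omega), if_neg (by omega)]
          rw [show 1 + x - 1 = x from by omega, show q + (1 + x) = q + 1 + x from by omega,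
            show q + 1 + x - 1 = q + x from by omega]
        rw [List.range_eq_range', List.range'_succ, List.map_cons, htail]
        congr 1
      have htM : t.Sublist (List.map (cf lam a) (List.range' (q + 1) (d' + 1))) := by
        rw [hMeq] at hsub'
        exact sublist_tail hsub'
      rw [hrangesplit, List.map_cons, List.map_append, hr'q, List.map_cons, ← e0]
      exact List.Sublist.cons₂ _ (List.sublist_append_of_sublist_right (List.Sublist.cons₂ _ htM))
    · -- nonzero
      intro x hx
      rcases List.mem_cons.mp hx with rfl | hx
      · exact hc0
      rcases List.mem_cons.mp hx with rfl | hx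
      · exact hcq
      · exact hnz' x (List.mem_cons_of_mem _ hx)
    · -- chain
      refine List.isChain_cons_cons.mpr ⟨?_, ?_⟩
      · have h1 : 0 < a 0 * cf lam a q := by rw [mul_comm]; exact hcq0
        have h2 : a 0 * (0 - lam * a 0) < 0 := by rw [mul_comm]; exact hc0a0
        have := sign_transfer h1 h2
        rw [mul_comm]
        exact this
      · have h0q : 0 < (0 - lam * a' 0) * cf lam a q := pos_pos hc'0a0 hcq0
        cases t with
        | nil => simp
        | cons u t' =>
          replace hch' := List.isChain_cons_cons.mp hch'
          rw [List.isChain_cons_cons]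
          exact ⟨sign_transfer h0q hch'.1, hch'.2⟩
    · -- length
      have hAsplit : (List.range (d + 1)).map a
          = (List.range q).map a ++ (List.range' q (d' + 1)).map a := by
        rw [← List.map_append]
        congr 1
        rw [List.range_eq_range', List.range_eq_range']
        have h1 : 0 + 1 * q = q := by omega
        have h2 : (d' + 1) + q = d + 1 := by omega
        rw [← h2, Nat.add_comm (d' + 1), ← List.range'_append (s := 0) (m := q) (n := d' + 1) (step := 1), h1]
      have hr'q1 : List.range' q (d' + 1) = q :: List.range' (q + 1) d' := by
        rw [List.range'_succ]
      have hright : ((List.range' q (d' + 1)).map a).filter (fun x => decide (x ≠ 0))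
          = a q :: ((List.range' (q + 1) d').map a).filter (fun x => decide (x ≠ 0)) := by
        rw [hr'q1, List.map_cons, List.filter_cons_of_pos (by simp [haq])]
      have hnzA' : ((List.range (d' + 1)).map a').filter (fun x => decide (x ≠ 0))
          = a q :: ((List.range' (q + 1) d').map a).filter (fun x => decide (x ≠ 0)) := by
        have hmap : (List.range (d' + 1)).map a' = a q :: (List.range' (q + 1) d').map a := by
          rw [List.range_eq_range', List.range'_succ, List.map_cons]
          congr 1
          · rw [List.range'_eq_map_range, List.range'_eq_map_range, List.map_map, List.map_map]
            apply List.map_congr_left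
            intro x hx
            simp only [Function.comp, ha'def]
            rw [show q + (1 + x) = q + 1 + x from by omega]
        rw [hmap, List.filter_cons_of_pos (by simp [haq])]
      set P := ((List.range q).map a).filter (fun x => decide (x ≠ 0)) with hPdef
      have ha0P : a 0 ∈ P := by
        rw [hPdef]
        refine List.mem_filter.mpr ⟨List.mem_map.mpr ⟨0, List.mem_range.mpr (by omega), rfl⟩, by simp [ha0]⟩
      have hPne : P ≠ [] := List.ne_nil_of_mem ha0P
      have hPsign : ∀ x ∈ P, 0 < x * a 0 := by
        intro x hx
        rw [hPdef, List.mem_filter] at hx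
        obtain ⟨i, hi, rfl⟩ := List.mem_map.mp hx.1
        rw [List.mem_range] at hi
        exact lt_of_le_of_ne (hiq i hi) (Ne.symm (mul_ne_zero (by simpa using hx.2) ha0))
      have hvarP : var P = 0 := var_of_same_sign (a 0) P hPsign
      have hlstP : lst P * a q < 0 := by
        have hm := lst_mem P hPne
        have h1 : 0 < a 0 * lst P := by rw [mul_comm]; exact hPsign _ hm
        have h2 : a 0 * a q < 0 := by rw [mul_comm]; exact hspec.2
        exact sign_transfer h1 h2
      have hvarA : var (((List.range (d + 1)).map a).filter (fun x => decide (x ≠ 0)))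
          = var (((List.range (d' + 1)).map a').filter (fun x => decide (x ≠ 0))) + 1 := by
        rw [hAsplit, List.filter_append, hright, var_append P hPne (a q) _, hvarP, if_pos hlstP,
          ← hnzA']
        ring
      rw [hvarA]
      simp only [List.length_cons] at hlen' ⊢
      omega
  · -- base case : no sign change
    push_neg at hq
    have hd1 : a (d + 1) = 0 := atop _ (by omega)
    have had0 : 0 < a d * a 0 :=
      lt_of_le_of_ne (hq d (by omega)) (Ne.symm (mul_ne_zero atopd ha0))
    refine ⟨[a d - lam * a (d + 1)], ?_, ?_, ?_, ?_⟩
    · have hsplit : List.range (d + 2) = 0 :: (List.range' 1 d ++ [d + 1]) := by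
        rw [List.range_succ, List.range_eq_range', List.range'_succ]
        simp
      rw [hsplit, List.map_cons, List.map_append, ← e0]
      refine List.Sublist.cons₂ _ (List.sublist_append_of_sublist_right ?_)
      simp [cf]
    · intro x hx
      rcases List.mem_cons.mp hx with rfl | hx
      · exact hc0
      · simp only [List.mem_singleton] at hx
        subst hx
        rw [hd1]; simpa using atopd
    · refine List.isChain_cons_cons.mpr ⟨?_, by simp⟩
      rw [hd1]
      nlinarith [mul_pos hlam had0]
    · have hz : var (((List.range (d + 1)).map a).filter (fun x => decide (x ≠ 0))) = 0 := by
        apply var_of_same_sign (a 0)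
        intro x hx
        rw [List.mem_filter] at hx
        obtain ⟨i, hi, rfl⟩ := List.mem_map.mp hx.1
        rw [List.mem_range] at hi
        have hxne : a i ≠ 0 := by simpa using hx.2
        exact lt_of_le_of_ne (hq i hi) (Ne.symm (mul_ne_zero hxne ha0))
      rw [hz]; rfl


lemma key_var (lam : ℝ) (hlam : 0 < lam) (d : ℕ) (a : ℕ → ℝ)
    (ha0 : a 0 ≠ 0) (had : a d ≠ 0) (atop : ∀ i, d < i → a i = 0) :
    var (((List.range (d + 1)).map a).filter (fun x => decide (x ≠ 0))) + 1
      ≤ var (((List.range (d + 2)).map (cf lam a)).filter (fun x => decide (x ≠ 0))) := by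
  obtain ⟨t, hsub, hnz, hch, hlen⟩ := key lam hlam d a ha0 had atop
  set r := (0 - lam * a 0) :: t with hr
  have hrfilter : r.filter (fun x => decide (x ≠ 0)) = r :=
    List.filter_eq_self.mpr (fun x hx => by simpa using hnz x hx)
  have hsub2 : r.Sublist (((List.range (d + 2)).map (cf lam a)).filter (fun x => decide (x ≠ 0))) := by
    rw [← hrfilter]
    exact List.Sublist.filter _ hsub
  have hbig : ∀ x ∈ ((List.range (d + 2)).map (cf lam a)).filter (fun x => decide (x ≠ 0)), x ≠ 0 :=
    fun x hx => by simpa using (List.mem_filter.mp hx).2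
  have h1 := var_sublist hsub2 hbig
  have h2 := var_chain r hch
  rw [hlen] at h2
  omega

open Polynomial in
lemma step (lam : ℝ) (hlam : 0 < lam) (g : ℝ[X]) (hg0 : g.coeff 0 ≠ 0) :
    signVar ((List.range (g.natDegree + 1)).map g.coeff) + 1
      ≤ signVar ((List.range (((X - C lam) * g).natDegree + 1)).map ((X - C lam) * g).coeff) := by
  have hg : g ≠ 0 := fun h => hg0 (by simp [h])
  have hXC : (X - C lam) ≠ 0 := Polynomial.X_sub_C_ne_zero lam
  have hdeg : ((X - C lam) * g).natDegree = g.natDegree + 2 - 1 := by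
    rw [Polynomial.natDegree_mul hXC hg, Polynomial.natDegree_X_sub_C]
    omega
  have hcoeff : ((X - C lam) * g).coeff = cf lam g.coeff := by
    funext i
    cases i with
    | zero =>
      rw [Polynomial.mul_coeff_zero]
      simp [cf]
    | succ n =>
      rw [sub_mul, Polynomial.coeff_sub, Polynomial.coeff_X_mul, Polynomial.coeff_C_mul]
      simp [cf]
  rw [signVar_eq, signVar_eq, hcoeff, hdeg, show g.natDegree + 2 - 1 + 1 = g.natDegree + 2 from by omega]
  exact key_var lam hlam g.natDegree g.coeff hg0
    (by simpa [Polynomial.coeff_natDegree] using Polynomial.leadingCoeff_ne_zero.mpr hg)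
    (fun i hi => Polynomial.coeff_eq_zero_of_natDegree_lt hi)

open Polynomial in
lemma many : ∀ (k : ℕ) (lam : Fin k → ℝ), (∀ i, 0 < lam i) → ∀ (g : ℝ[X]), g.coeff 0 ≠ 0 →
    signVar ((List.range (g.natDegree + 1)).map g.coeff) + k
      ≤ signVar ((List.range ((g * ∏ i, (X - C (lam i))).natDegree + 1)).map
          (g * ∏ i, (X - C (lam i))).coeff) := by
  intro k
  induction k with
  | zero => intro lam _ g hg0; simp
  | succ k ih =>
    intro lam hlam g hg0
    have h1 := ih (fun i => lam i.castSucc) (fun i => hlam _) g hg0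
    have hprod : (∏ i : Fin (k+1), (X - C (lam i)))
        = (∏ i : Fin k, (X - C ((fun i => lam i.castSucc) i))) * (X - C (lam (Fin.last k))) := by
      rw [Fin.prod_univ_castSucc]
    have hgP0 : (g * ∏ i : Fin k, (X - C ((fun i => lam i.castSucc) i))).coeff 0 ≠ 0 := by
      rw [Polynomial.coeff_zero_eq_eval_zero, Polynomial.eval_mul, Polynomial.eval_prod,
        ← Polynomial.coeff_zero_eq_eval_zero]
      apply mul_ne_zero hg0
      apply Finset.prod_ne_zero_iff.mpr
      intro i _
      simp only [Polynomial.eval_sub, Polynomial.eval_X, Polynomial.eval_C, zero_sub, neg_ne_zero]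
      exact ne_of_gt (hlam _)
    have h2 := step (lam (Fin.last k)) (hlam _) _ hgP0
    have hmain : g * ∏ i : Fin (k+1), (X - C (lam i))
        = (X - C (lam (Fin.last k))) * (g * ∏ i : Fin k, (X - C ((fun i => lam i.castSucc) i))) := by
      rw [hprod]
      ring
    rw [hmain]
    beta_reduce at h2 ⊢
    omega

open Polynomial in
lemma parity (p : ℝ[X]) (hp0 : p.coeff 0 ≠ 0) :
    Even (signVar ((List.range (p.natDegree + 1)).map p.coeff))
      ↔ 0 < p.coeff 0 * p.leadingCoeff := by
  have hp : p ≠ 0 := fun h => hp0 (by simp [h])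
  have hlead : p.coeff p.natDegree ≠ 0 := by
    simpa [Polynomial.coeff_natDegree] using Polynomial.leadingCoeff_ne_zero.mpr hp
  have hLdecomp : (List.range (p.natDegree + 1)).map p.coeff
      = p.coeff 0 :: ((List.range' 1 p.natDegree).map p.coeff) := by
    rw [List.range_eq_range', List.range'_succ, List.map_cons]
  rw [signVar_eq, hLdecomp, List.filter_cons_of_pos (by simp [hp0])]
  set Q := ((List.range' 1 p.natDegree).map p.coeff).filter (fun x => decide (x ≠ 0)) with hQ
  have hQnz : ∀ x ∈ Q, x ≠ 0 := fun x hx => by simpa using (List.mem_filter.mp hx).2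
  rw [var_parity Q (p.coeff 0) hp0 hQnz]
  have hsplit : p.coeff 0 :: Q
      = (((List.range p.natDegree).map p.coeff).filter (fun x => decide (x ≠ 0)))
        ++ [p.coeff p.natDegree] := by
    rw [← List.filter_cons_of_pos (l := (List.range' 1 p.natDegree).map p.coeff) (by simp [hp0]),
      ← hLdecomp, List.range_succ, List.map_append, List.filter_append]
    congr 1
    rw [show List.map p.coeff [p.natDegree] = [p.coeff p.natDegree] from rfl]
    exact List.filter_eq_self.mpr
      (fun a ha => by rw [List.mem_singleton] at ha; subst ha; simpa using hlead)
  have hlst : lst (p.coeff 0 :: Q) = p.coeff p.natDegree := by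
    rw [hsplit, lst_append_singleton]
  rw [hlst, Polynomial.coeff_natDegree]

end SV

open Polynomial SV in
theorem sign_variation_mul_pos_linear_factors (k : ℕ) (h : Polynomial ℝ)
    (hne : h ≠ 0) (h0 : h.eval 0 ≠ 0) (lam : Fin k → ℝ) (hlam : ∀ i, 0 < lam i)
    (f : Polynomial ℝ)
    (hf : f = h * ∏ i : Fin k, (Polynomial.X - Polynomial.C (lam i))) :
    ∃ ν : ℕ, Even ν ∧
      signVar ((List.range (f.natDegree + 1)).map f.coeff)
        = k + signVar ((List.range (h.natDegree + 1)).map h.coeff) + ν := by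
  have hc0 : h.coeff 0 ≠ 0 := by rwa [Polynomial.coeff_zero_eq_eval_zero]
  have hineq := many k lam hlam h hc0
  rw [← hf] at hineq
  have hf0 : f.coeff 0 = h.coeff 0 * ∏ i, (0 - lam i) := by
    rw [hf, Polynomial.coeff_zero_eq_eval_zero, Polynomial.eval_mul, Polynomial.eval_prod,
      ← Polynomial.coeff_zero_eq_eval_zero]
    congr 1
    apply Finset.prod_congr rfl
    intro i _
    simp
  have hflead : f.leadingCoeff = h.leadingCoeff := by
    rw [hf, Polynomial.leadingCoeff_mul,
      (Polynomial.monic_prod_of_monic _ _ (fun i _ => Polynomial.monic_X_sub_C _)).leadingCoeff,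
      mul_one]
  have hprodpos : 0 < ∏ i, lam i := Finset.prod_pos (fun i _ => hlam i)
  have hfc0ne : f.coeff 0 ≠ 0 := by
    rw [hf0]
    apply mul_ne_zero hc0
    apply Finset.prod_ne_zero_iff.mpr
    intro i _
    have := hlam i
    intro hcon
    nlinarith
  have hpf := parity f hfc0ne
  have hph := parity h hc0
  have hneg : (∏ i, ((0:ℝ) - lam i)) = (-1)^k * ∏ i, lam i := by
    rw [show (∏ i, ((0:ℝ) - lam i)) = ∏ i, (-1) * lam i from
      Finset.prod_congr rfl (fun i _ => by ring)]
    rw [Finset.prod_mul_distrib, Finset.prod_const, Finset.card_univ, Fintype.card_fin]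
  have hprods : f.coeff 0 * f.leadingCoeff
      = (h.coeff 0 * h.leadingCoeff) * ((-1)^k * ∏ i, lam i) := by
    rw [hf0, hflead, hneg]
    ring
  have hXne : h.coeff 0 * h.leadingCoeff ≠ 0 :=
    mul_ne_zero hc0 (Polynomial.leadingCoeff_ne_zero.mpr hne)
  have hiff : Even (signVar ((List.range (f.natDegree + 1)).map f.coeff))
      ↔ (Even k ↔ Even (signVar ((List.range (h.natDegree + 1)).map h.coeff))) := by
    rw [hpf, hph, hprods]
    rcases Nat.even_or_odd k with hk | hk
    · have h1 : (-1:ℝ)^k = 1 := Even.neg_one_pow hk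
      rw [h1, one_mul]
      have hx : (0 < h.coeff 0 * h.leadingCoeff * ∏ i, lam i)
          ↔ 0 < h.coeff 0 * h.leadingCoeff := by
        constructor
        · intro hp2
          rcases hXne.lt_or_gt with hlt | hlt
          · nlinarith
          · exact hlt
        · intro hp2
          exact mul_pos hp2 hprodpos
      rw [hx]
      constructor
      · intro hp2
        exact ⟨fun _ => hp2, fun _ => hk⟩
      · intro hiffk
        exact hiffk.1 hk
    · have h1 : (-1:ℝ)^k = -1 := Odd.neg_one_pow hk
      rw [h1]
      have hkne : ¬ Even k := Nat.not_even_iff_odd.mpr hk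
      have hx : (0 < h.coeff 0 * h.leadingCoeff * (-1 * ∏ i, lam i))
          ↔ h.coeff 0 * h.leadingCoeff < 0 := by
        constructor
        · intro hp2
          rcases hXne.lt_or_gt with hlt | hlt
          · exact hlt
          · nlinarith
        · intro hp2
          nlinarith
      rw [hx]
      constructor
      · intro hlt0
        exact ⟨fun hek => absurd hek hkne, fun hp2 => (lt_asymm hlt0 hp2).elim⟩
      · intro hiffk
        have hnp : ¬ (0 < h.coeff 0 * h.leadingCoeff) := fun hp2 => hkne (hiffk.mpr hp2)
        exact lt_of_le_of_ne (not_lt.mp hnp) hXne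
  refine ⟨signVar ((List.range (f.natDegree + 1)).map f.coeff)
      - (k + signVar ((List.range (h.natDegree + 1)).map h.coeff)), ?_, by omega⟩
  rw [Nat.even_sub (by omega), Nat.even_add]
  exact hiff
end
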